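/- arXiv:2410.11309 — 9 statements merged into one kernel-verified Lean document; each statement's English description precedes it below -/
import Mathlib

section
/- Great orthogonality theorem for projective irreps (diagonal case): let D be an irreducible unitary ω-projective representation of a finite group G of dimension d, where |ω g h| = 1 for all g, h. Then for all indices i, j, k, l, ∑_{g ∈ G} (D g)_{i j} · conj((D g)_{k l}) = (|G| / d) · δ_{i k} · δ_{j l}. -/
open Matrix Kronecker BigOperators

noncomputable section

/-- A unitary `ω`-projective representation of `G` of dimension `d`. -/
def IsUnitaryProjRep {G : Type} [Group G] (ω : G → G → ℂ) {d : ℕ}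
    (D : G → Matrix (Fin d) (Fin d) ℂ) : Prop :=
  (∀ g, D g ∈ Matrix.unitaryGroup (Fin d) ℂ) ∧
    ∀ g h, D g * D h = ω g h • D (g * h)

/-- Irreducibility: the only invariant subspaces of `ℂ^d` are `⊥` and `⊤`. -/
def IsIrred {G : Type} [Group G] {d : ℕ}
    (D : G → Matrix (Fin d) (Fin d) ℂ) : Prop :=
  ∀ p : Submodule ℂ (Fin d → ℂ),
    (∀ g : G, ∀ v ∈ p, (D g).mulVec v ∈ p) → p = ⊥ ∨ p = ⊤

/-- Equivalence of projective representations (of possibly different stated dimensions). -/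
def ProjEquiv {G : Type} [Group G] {d₁ d₂ : ℕ}
    (D₁ : G → Matrix (Fin d₁) (Fin d₁) ℂ)
    (D₂ : G → Matrix (Fin d₂) (Fin d₂) ℂ) : Prop :=
  ∃ h : d₁ = d₂, ∃ S : Matrix (Fin d₂) (Fin d₂) ℂ, IsUnit S.det ∧
    ∀ g, D₂ g = S⁻¹ * (Matrix.reindex (finCongr h) (finCongr h) (D₁ g)) * S

/-- A normalized unitary 2-cocycle on `G`. -/
def IsCocycle {G : Type} [Group G] (ω : G → G → ℂ) : Prop :=
  (∀ g h, ‖ω g h‖ = 1) ∧ (∀ g, ω 1 g = 1) ∧ (∀ g, ω g 1 = 1) ∧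
    ∀ g h k, ω g h * ω (g * h) k = ω g (h * k) * ω h k

/-- The regular representation matrix of `g`. -/
def regRep (G : Type) [Group G] [DecidableEq G] (g : G) : Matrix G G ℂ :=
  fun h h' => if h = g * h' then 1 else 0

/-- The `ω`-projective regular representation matrix of `g`. -/
def projRegRep {G : Type} [Group G] [DecidableEq G] (ω : G → G → ℂ) (g : G) :
    Matrix G G ℂ :=
  fun h h' => if h = g * h' then ω g h' else 0

theorem schur_aux {G : Type} [Group G] {d : ℕ} (hd : 0 < d)
    {D : G → Matrix (Fin d) (Fin d) ℂ}
    (hirr : IsIrred D)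
    (M : Matrix (Fin d) (Fin d) ℂ)
    (hM : ∀ g, D g * M = M * D g) :
    ∃ c : ℂ, M = c • (1 : Matrix (Fin d) (Fin d) ℂ) := by
  haveI : Nontrivial (Fin d → ℂ) := by
    have : Nonempty (Fin d) := ⟨⟨0, hd⟩⟩
    infer_instance
  obtain ⟨c, hc⟩ := Module.End.exists_eigenvalue (Matrix.mulVecLin M)
  refine ⟨c, ?_⟩
  set p := Module.End.eigenspace (Matrix.mulVecLin M) c with hp
  have hinv : ∀ g : G, ∀ v ∈ p, (D g).mulVec v ∈ p := by
    intro g v hv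
    rw [hp, Module.End.mem_eigenspace_iff] at hv ⊢
    simp only [Matrix.mulVecLin_apply] at hv ⊢
    rw [Matrix.mulVec_mulVec, ← hM, ← Matrix.mulVec_mulVec, hv, Matrix.mulVec_smul]
  rcases hirr p hinv with h | h
  · exact absurd h hc
  · have hall : ∀ v : Fin d → ℂ, M.mulVec v = c • v := by
      intro v
      have : v ∈ p := h ▸ Submodule.mem_top
      rw [hp, Module.End.mem_eigenspace_iff] at this
      simpa using this
    ext a b
    have := congrFun (hall (Pi.single b 1)) a
    by_cases hab : a = b <;>
      simp [Matrix.mulVec_single, Matrix.smul_apply, Matrix.one_apply, Pi.single_apply, hab] at this ⊢ <;>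
      simp [this]

/-- great orthogonality theorem for projective irreps (diagonal case). -/
theorem great_orthogonality_diagonal
    {G : Type} [Group G] [Fintype G]
    (ω : G → G → ℂ) (hω : ∀ g h, ‖ω g h‖ = 1)
    {d : ℕ} {D : G → Matrix (Fin d) (Fin d) ℂ}
    (hD : IsUnitaryProjRep ω D) (hirr : IsIrred D)
    (i j k l : Fin d) :
    ∑ g : G, D g i j * (starRingEnd ℂ) (D g k l)
      = ((Fintype.card G : ℂ) / (d : ℂ))
          * (if i = k then 1 else 0) * (if j = l then 1 else 0) := by
  have hd : 0 < d := i.pos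
  set E : Matrix (Fin d) (Fin d) ℂ := Matrix.single j l 1 with hE
  set M : Matrix (Fin d) (Fin d) ℂ := ∑ g : G, D g * E * (D g)ᴴ with hM
  -- unitarity facts
  have hstar : ∀ g : G, (D g)ᴴ * D g = 1 := fun g => (hD.1 g).1
  have hstar' : ∀ g : G, D g * (D g)ᴴ = 1 := fun g => (hD.1 g).2
  -- M commutes with every D h
  have hcomm : ∀ h : G, D h * M = M * D h := by
    intro h
    have key : D h * M * (D h)ᴴ = M := by
      rw [hM, Finset.mul_sum, Finset.sum_mul]
      rw [show (∑ g : G, D g * E * (D g)ᴴ) = ∑ g : G, D (h * g) * E * (D (h * g))ᴴ from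
        (Fintype.sum_equiv (Equiv.mulLeft h) _ _ (fun g => by simp)).symm]
      refine Finset.sum_congr rfl fun g _ => ?_
      have h1 : D h * D g = ω h g • D (h * g) := hD.2 h g
      have h2 : (D g)ᴴ * (D h)ᴴ = (starRingEnd ℂ) (ω h g) • (D (h * g))ᴴ := by
        rw [← Matrix.conjTranspose_mul, h1, Matrix.conjTranspose_smul]
        rfl
      have habs : ω h g * (starRingEnd ℂ) (ω h g) = 1 := by
        rw [Complex.mul_conj, ← Complex.sq_norm, hω h g]
        norm_num
      calc D h * (D g * E * (D g)ᴴ) * (D h)ᴴ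
          = (D h * D g) * E * ((D g)ᴴ * (D h)ᴴ) := by simp only [Matrix.mul_assoc]
        _ = (ω h g • D (h * g)) * E * ((starRingEnd ℂ) (ω h g) • (D (h * g))ᴴ) := by rw [h1, h2]
        _ = (ω h g * (starRingEnd ℂ) (ω h g)) • (D (h * g) * E * (D (h * g))ᴴ) := by
              simp [Matrix.smul_mul, Matrix.mul_smul, smul_smul, mul_comm]
        _ = D (h * g) * E * (D (h * g))ᴴ := by rw [habs, one_smul]
    calc D h * M = D h * M * ((D h)ᴴ * D h) := by rw [hstar, mul_one]
      _ = (D h * M * (D h)ᴴ) * D h := by simp only [Matrix.mul_assoc]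
      _ = M * D h := by rw [key]
  obtain ⟨c, hc⟩ := schur_aux hd hirr M hcomm
  -- compute trace of M
  have htrE : E.trace = if j = l then 1 else 0 := by
    by_cases hjl : j = l
    · subst hjl; simp [hE, Matrix.trace, Matrix.diag, Matrix.single]
    · have hz : ∀ x : Fin d, E x x = 0 := by
        intro x
        simp only [hE, Matrix.single, Matrix.of_apply, ite_eq_right_iff]
        rintro ⟨rfl, rfl⟩
        exact absurd rfl hjl
      simp [Matrix.trace, Matrix.diag, hz, hjl]
  have htr : M.trace = (Fintype.card G : ℂ) * (if j = l then 1 else 0) := by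
    rw [hM, Matrix.trace_sum]
    have : ∀ g : G, (D g * E * (D g)ᴴ).trace = E.trace := by
      intro g
      rw [Matrix.trace_mul_comm, ← Matrix.mul_assoc, hstar, one_mul]
    simp [this, htrE, Finset.sum_const]
  have htrc : M.trace = c * d := by
    rw [hc, Matrix.trace_smul, Matrix.trace_one]
    simp [smul_eq_mul]
  have hcval : c = (Fintype.card G : ℂ) / d * (if j = l then 1 else 0) := by
    have hdne : (d : ℂ) ≠ 0 := Nat.cast_ne_zero.2 hd.ne'
    field_simp at htrc ⊢
    rw [← htrc, htr]
  -- compute entry (i,k) of M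
  have hentry : M i k = ∑ g : G, D g i j * (starRingEnd ℂ) (D g k l) := by
    rw [hM, Matrix.sum_apply]
    refine Finset.sum_congr rfl fun g _ => ?_
    have : (D g * E) = fun a b => if b = l then D g a j else 0 := by
      ext a b
      by_cases hbl : b = l
      · subst hbl; simp [hE]
      · simp [hE, hbl]
    rw [Matrix.mul_apply]
    simp only [this, Matrix.conjTranspose_apply]
    rw [Finset.sum_eq_single l] <;> simp_all
  have hfin : M i k = c * (if i = k then 1 else 0) := by
    rw [hc]
    by_cases hik : i = k <;> simp [Matrix.smul_apply, Matrix.one_apply, hik]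
  rw [← hentry, hfin, hcval]
  ring
end
end

section
/- Great orthogonality theorem for projective irreps (off-diagonal case): let D₁, D₂ be irreducible unitary ω-projective representations of a finite group G (with the same ω, |ω g h| = 1) of dimensions d₁ and d₂, and suppose D₁ and D₂ are not equivalent. Then for all indices i, j, k, l, ∑_{g ∈ G} (D₁ g)_{i j} · conj((D₂ g)_{k l}) = 0. -/
open Matrix Kronecker BigOperators

noncomputable section

/-- great orthogonality theorem for projective irreps (off-diagonal case). -/
theorem great_orthogonality_offdiagonal
    {G : Type} [Group G] [Fintype G]
    (ω : G → G → ℂ) (hω : ∀ g h, ‖ω g h‖ = 1)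
    {d₁ d₂ : ℕ}
    {D₁ : G → Matrix (Fin d₁) (Fin d₁) ℂ} {D₂ : G → Matrix (Fin d₂) (Fin d₂) ℂ}
    (h₁ : IsUnitaryProjRep ω D₁) (h₂ : IsUnitaryProjRep ω D₂)
    (hirr₁ : IsIrred D₁) (hirr₂ : IsIrred D₂)
    (hne : ¬ ProjEquiv D₁ D₂)
    (i j : Fin d₁) (k l : Fin d₂) :
    ∑ g : G, D₁ g i j * (starRingEnd ℂ) (D₂ g k l) = 0 := by
  classical
  obtain ⟨hu₁, hmul₁⟩ := h₁
  obtain ⟨hu₂, hmul₂⟩ := h₂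
  set X : Matrix (Fin d₁) (Fin d₂) ℂ := Matrix.single j l 1 with hX
  set M : Matrix (Fin d₁) (Fin d₂) ℂ := ∑ g : G, D₁ g * X * (D₂ g)ᴴ with hM
  have hωc : ∀ g h : G, ω g h * (starRingEnd ℂ) (ω g h) = 1 := by
    intro g h
    rw [Complex.mul_conj]
    norm_cast
    rw [Complex.normSq_eq_norm_sq, hω]
    norm_num
  -- intertwining
  have hint : ∀ h : G, D₁ h * M = M * D₂ h := by
    intro h
    rw [hM]
    rw [Matrix.mul_sum, Matrix.sum_mul]
    rw [← Equiv.sum_comp (Equiv.mulLeft h) (fun g => D₁ g * X * (D₂ g)ᴴ * D₂ h)]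
    apply Finset.sum_congr rfl
    intro g _
    have hstar : (D₂ h)ᴴ * D₂ h = 1 := by
      have := (Matrix.mem_unitaryGroup_iff'.mp (hu₂ h))
      simpa [Matrix.star_eq_conjTranspose] using this
    have e2 : (D₂ g)ᴴ * (D₂ h)ᴴ = (starRingEnd ℂ) (ω h g) • (D₂ (h * g))ᴴ := by
      have e := congrArg Matrix.conjTranspose (hmul₂ h g)
      simpa [Matrix.conjTranspose_mul, Matrix.conjTranspose_smul] using e
    have key : (D₂ (h * g))ᴴ * D₂ h = ω h g • (D₂ g)ᴴ := by
      have e3 : (D₂ g)ᴴ * ((D₂ h)ᴴ * D₂ h)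
          = (starRingEnd ℂ) (ω h g) • ((D₂ (h * g))ᴴ * D₂ h) := by
        rw [← Matrix.mul_assoc, e2, Matrix.smul_mul]
      rw [hstar, Matrix.mul_one] at e3
      have := congrArg (fun A => ω h g • A) e3
      simpa [smul_smul, hωc h g] using this.symm
    simp only [Equiv.coe_mulLeft]
    show D₁ h * (D₁ g * X * (D₂ g)ᴴ) = D₁ (h * g) * X * (D₂ (h * g))ᴴ * D₂ h
    rw [Matrix.mul_assoc (D₁ (h * g) * X), key]
    simp only [← Matrix.mul_assoc]
    rw [hmul₁ h g]
    simp [Matrix.smul_mul, Matrix.mul_smul]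
  -- entry computation
  have hent : M i k = ∑ g : G, D₁ g i j * (starRingEnd ℂ) (D₂ g k l) := by
    rw [hM, Matrix.sum_apply]
    apply Finset.sum_congr rfl
    intro g _
    rw [Matrix.mul_assoc]
    simp [hX, Matrix.mul_apply, Matrix.single, Matrix.conjTranspose_apply,
      Finset.sum_ite_eq, ite_and, mul_comm]
  -- Schur
  have hM0 : M = 0 := by
    by_contra hM0
    have hMV : ∃ x y, M x y ≠ 0 := by
      by_contra h
      push_neg at h
      exact hM0 (by ext x y; simpa using h x y)
    set f : (Fin d₂ → ℂ) →ₗ[ℂ] (Fin d₁ → ℂ) := M.mulVecLin with hf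
    have hcomm : ∀ g v, (D₁ g).mulVec (M.mulVec v) = M.mulVec ((D₂ g).mulVec v) := by
      intro g v
      rw [Matrix.mulVec_mulVec, Matrix.mulVec_mulVec, hint]
    have hrinv : ∀ g : G, ∀ v ∈ LinearMap.range f, (D₁ g).mulVec v ∈ LinearMap.range f := by
      rintro g v ⟨w, rfl⟩
      exact ⟨(D₂ g).mulVec w, (hcomm g w).symm⟩
    have hrange : LinearMap.range f = ⊤ := by
      rcases hirr₁ (LinearMap.range f) hrinv with h | h
      · exfalso
        obtain ⟨x, y, hxy⟩ := hMV
        apply hxy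
        have : M.mulVec (Pi.single y 1) = 0 := by
          have : f (Pi.single y 1) ∈ LinearMap.range f := LinearMap.mem_range_self f _
          rw [h] at this
          simpa [hf] using this
        have := congrFun this x
        simpa using this
      · exact h
    have hkinv : ∀ g : G, ∀ v ∈ LinearMap.ker f, (D₂ g).mulVec v ∈ LinearMap.ker f := by
      intro g v hv
      rw [LinearMap.mem_ker] at hv ⊢
      show M.mulVec ((D₂ g).mulVec v) = 0
      rw [← hcomm g v]
      have hv' : M.mulVec v = 0 := hv
      rw [hv', Matrix.mulVec_zero]
    have hker : LinearMap.ker f = ⊥ := by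
      rcases hirr₂ (LinearMap.ker f) hkinv with h | h
      · exact h
      · exfalso
        obtain ⟨x, y, hxy⟩ := hMV
        apply hxy
        have : M.mulVec (Pi.single y 1) = 0 := by
          have : Pi.single y 1 ∈ LinearMap.ker f := by rw [h]; trivial
          simpa [hf] using this
        have := congrFun this x
        simpa using this
    have hbij : Function.Bijective f :=
      ⟨LinearMap.ker_eq_bot.mp hker, LinearMap.range_eq_top.mp hrange⟩
    have hd : d₂ = d₁ := by
      have := (LinearEquiv.ofBijective f hbij).finrank_eq
      simpa [Module.finrank_fin_fun] using this
    subst hd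
    have hMunit : IsUnit M := Matrix.mulVec_injective_iff_isUnit.mp hbij.1
    have hdet : IsUnit M.det := (Matrix.isUnit_iff_isUnit_det M).mp hMunit
    apply hne
    refine ⟨rfl, M, hdet, fun g => ?_⟩
    have : M⁻¹ * (D₁ g * M) = M⁻¹ * (M * D₂ g) := by rw [hint g]
    rw [← Matrix.mul_assoc, ← Matrix.mul_assoc, Matrix.nonsing_inv_mul M hdet,
      Matrix.one_mul] at this
    simpa [Matrix.mul_assoc] using this.symm
  rw [← hent, hM0]
  simp
end
end

section
/- Dimension equation for projective irreps: let G be a finite group, ω a normalized unitary 2-cocycle on G, and let (D^α)_{α ∈ A} be a family of pairwise inequivalent irreducible unitary ω-projective representations of G, with dimensions d_α, such that every irreducible unitary ω-projective representation of G (with the same ω) is equivalent to D^α for some α ∈ A. Then ∑_{α ∈ A} d_α² = |G|. -/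
open Matrix Kronecker BigOperators

noncomputable section

namespace ProjAux

variable {G : Type} [Group G] [Fintype G] {ω : G → G → ℂ}

lemma conj_omega_mul (hω : IsCocycle ω) (g h : G) :
    star (ω g h) * ω g h = 1 := by
  have h1 : ‖ω g h‖ = 1 := hω.1 g h
  rw [Complex.star_def, mul_comm, Complex.mul_conj, Complex.normSq_eq_norm_sq, h1]
  norm_num

lemma omega_ne_zero (hω : IsCocycle ω) (g h : G) : ω g h ≠ 0 := by
  intro h0
  have := conj_omega_mul hω g h
  rw [h0] at this
  simp at this

variable {d : ℕ} {D : G → Matrix (Fin d) (Fin d) ℂ}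

lemma rep_star_mul (hD : IsUnitaryProjRep ω D) (g : G) : (D g)ᴴ * D g = 1 :=
  (Unitary.mem_iff.mp (hD.1 g)).1

lemma rep_mul_star (hD : IsUnitaryProjRep ω D) (g : G) : D g * (D g)ᴴ = 1 :=
  (Unitary.mem_iff.mp (hD.1 g)).2

lemma rep_one (hω : IsCocycle ω) (hD : IsUnitaryProjRep ω D) : D 1 = 1 := by
  have h1 : D 1 * D 1 = D 1 := by
    rw [hD.2 1 1, hω.2.1 1, one_smul, mul_one]
  have h2 : D 1 * D 1 * (D 1)ᴴ = D 1 * (D 1)ᴴ := by rw [h1]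
  rw [mul_assoc, rep_mul_star hD, mul_one] at h2
  exact h2

lemma omega_inv (hω : IsCocycle ω) (g : G) : ω g g⁻¹ = ω g⁻¹ g := by
  have := hω.2.2.2 g g⁻¹ g
  simpa [hω.2.1, hω.2.2.1] using this

lemma star_rep_twist (hω : IsCocycle ω) (hD : IsUnitaryProjRep ω D) (h g : G) :
    ω h g • (D g)ᴴ = (D (h * g))ᴴ * D h := by
  have h1 : (D g)ᴴ * (D h)ᴴ = star (ω h g) • (D (h * g))ᴴ := by
    rw [← conjTranspose_mul, hD.2 h g, conjTranspose_smul]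
  have h2 : (D g)ᴴ * ((D h)ᴴ * D h) = (star (ω h g) • (D (h * g))ᴴ) * D h := by
    rw [← mul_assoc, h1]
  rw [rep_star_mul hD, mul_one] at h2
  rw [h2, smul_mul_assoc, smul_smul, mul_comm (ω h g), conj_omega_mul hω, one_smul]

variable {d₁ d₂ : ℕ} {D₁ : G → Matrix (Fin d₁) (Fin d₁) ℂ}
  {D₂ : G → Matrix (Fin d₂) (Fin d₂) ℂ}

lemma avg_intertwine (hω : IsCocycle ω)
    (hD₁ : IsUnitaryProjRep ω D₁) (hD₂ : IsUnitaryProjRep ω D₂)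
    (X : Matrix (Fin d₁) (Fin d₂) ℂ) (h : G) :
    D₁ h * (∑ g : G, D₁ g * X * (D₂ g)ᴴ) = (∑ g : G, D₁ g * X * (D₂ g)ᴴ) * D₂ h := by
  rw [Matrix.mul_sum, Matrix.sum_mul]
  apply Fintype.sum_equiv (Equiv.mulLeft h)
  intro g
  show D₁ h * (D₁ g * X * (D₂ g)ᴴ) = D₁ (h * g) * X * (D₂ (h * g))ᴴ * D₂ h
  have L : D₁ h * (D₁ g * X * (D₂ g)ᴴ) = ω h g • (D₁ (h * g) * X * (D₂ g)ᴴ) := by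
    rw [← Matrix.mul_assoc, ← Matrix.mul_assoc, hD₁.2 h g, Matrix.smul_mul, Matrix.smul_mul]
  have R : D₁ (h * g) * X * (D₂ (h * g))ᴴ * D₂ h = ω h g • (D₁ (h * g) * X * (D₂ g)ᴴ) := by
    rw [Matrix.mul_assoc, ← star_rep_twist hω hD₂ h g, Matrix.mul_smul]
  rw [L, R]

lemma inter_ker (hirr₂ : IsIrred D₂) {T : Matrix (Fin d₁) (Fin d₂) ℂ}
    (hT : ∀ g : G, D₁ g * T = T * D₂ g) :
    T = 0 ∨ LinearMap.ker T.mulVecLin = ⊥ := by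
  have hinv : ∀ g : G, ∀ v ∈ LinearMap.ker T.mulVecLin,
      (D₂ g).mulVec v ∈ LinearMap.ker T.mulVecLin := by
    intro g v hv
    simp only [LinearMap.mem_ker, Matrix.mulVecLin_apply] at *
    rw [Matrix.mulVec_mulVec, ← hT g, ← Matrix.mulVec_mulVec, hv, Matrix.mulVec_zero]
  rcases hirr₂ (LinearMap.ker T.mulVecLin) hinv with h | h
  · exact Or.inr h
  · left
    ext i j
    have hmem : (Pi.single j 1 : Fin d₂ → ℂ) ∈ LinearMap.ker T.mulVecLin := by
      rw [h]; trivial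
    simp only [LinearMap.mem_ker, Matrix.mulVecLin_apply] at hmem
    have := congrFun hmem i
    simpa [Matrix.mulVec_single] using this

lemma inter_range (hirr₁ : IsIrred D₁) {T : Matrix (Fin d₁) (Fin d₂) ℂ}
    (hT : ∀ g : G, D₁ g * T = T * D₂ g) :
    T = 0 ∨ LinearMap.range T.mulVecLin = ⊤ := by
  have hinv : ∀ g : G, ∀ v ∈ LinearMap.range T.mulVecLin,
      (D₁ g).mulVec v ∈ LinearMap.range T.mulVecLin := by
    rintro g v ⟨u, rfl⟩
    exact ⟨(D₂ g).mulVec u, by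
      simp only [Matrix.mulVecLin_apply]
      rw [Matrix.mulVec_mulVec, ← hT g, ← Matrix.mulVec_mulVec]⟩
  rcases hirr₁ (LinearMap.range T.mulVecLin) hinv with h | h
  · left
    ext i j
    have hmem : T.mulVec (Pi.single j 1) ∈ LinearMap.range T.mulVecLin :=
      ⟨Pi.single j 1, rfl⟩
    rw [h] at hmem
    have : T.mulVec (Pi.single j 1) = 0 := hmem
    have := congrFun this i
    simpa [Matrix.mulVec_single] using this
  · exact Or.inr h

lemma intertwiner_zero_or_equiv (hirr₁ : IsIrred D₁) (hirr₂ : IsIrred D₂)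
    {T : Matrix (Fin d₁) (Fin d₂) ℂ} (hT : ∀ g : G, D₁ g * T = T * D₂ g) :
    T = 0 ∨ ProjEquiv D₁ D₂ := by
  by_cases hT0 : T = 0
  · exact Or.inl hT0
  right
  have hker : LinearMap.ker T.mulVecLin = ⊥ := (inter_ker hirr₂ hT).resolve_left hT0
  have hrange : LinearMap.range T.mulVecLin = ⊤ := (inter_range hirr₁ hT).resolve_left hT0
  have hbij : Function.Bijective T.mulVecLin :=
    ⟨LinearMap.ker_eq_bot.mp hker, LinearMap.range_eq_top.mp hrange⟩
  have hdim : d₁ = d₂ := by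
    have := (LinearEquiv.ofBijective T.mulVecLin hbij).finrank_eq
    simpa using this.symm
  set e : Fin d₁ ≃ Fin d₂ := finCongr hdim with he
  set S : Matrix (Fin d₂) (Fin d₂) ℂ := Matrix.reindex e (Equiv.refl _) T with hS
  have hSmul : ∀ v : Fin d₂ → ℂ, S.mulVec v = fun i => T.mulVec v (e.symm i) := by
    intro v
    ext i
    simp [hS, Matrix.mulVec, Matrix.reindex_apply, Matrix.submatrix_apply, dotProduct]
  have hdet : IsUnit S.det := by
    rw [isUnit_iff_ne_zero]
    intro h0
    obtain ⟨v, hv0, hv⟩ := (Matrix.exists_mulVec_eq_zero_iff).mpr h0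
    have hTv : T.mulVec v = 0 := by
      ext i
      have := congrFun hv (e i)
      rw [hSmul] at this
      simpa using this
    have : v = 0 := by
      apply LinearMap.ker_eq_bot.mp hker
      simpa [Matrix.mulVecLin_apply] using hTv
    exact hv0 this
  have key : ∀ g, (Matrix.reindex e e (D₁ g)) * S = S * D₂ g := by
    intro g
    ext i j
    have l1 : ((Matrix.reindex e e (D₁ g)) * S) i j = (D₁ g * T) (e.symm i) j := by
      rw [Matrix.mul_apply, Matrix.mul_apply]
      apply Fintype.sum_equiv e.symm
      intro k
      simp [hS, Matrix.reindex_apply, Matrix.submatrix_apply]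
    have l2 : (S * D₂ g) i j = (T * D₂ g) (e.symm i) j := by
      rw [Matrix.mul_apply, Matrix.mul_apply]
      apply Finset.sum_congr rfl
      intro k _
      simp [hS, Matrix.reindex_apply, Matrix.submatrix_apply]
    rw [l1, l2, hT g]
  refine ⟨hdim, S, hdet, fun g => ?_⟩
  rw [mul_assoc, key g, ← mul_assoc, Matrix.nonsing_inv_mul S hdet, one_mul]

lemma commutant_scalar {D : G → Matrix (Fin d) (Fin d) ℂ} (hirr : IsIrred D)
    (T : Matrix (Fin d) (Fin d) ℂ) (hT : ∀ g : G, D g * T = T * D g) :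
    ∃ c : ℂ, T = c • (1 : Matrix (Fin d) (Fin d) ℂ) := by
  rcases Nat.eq_zero_or_pos d with hd | hd
  · refine ⟨0, ?_⟩
    subst hd
    ext i j
    exact i.elim0
  · haveI : Nontrivial (Fin d → ℂ) := by
      refine ⟨0, Pi.single ⟨0, hd⟩ 1, fun h => ?_⟩
      have := congrFun h ⟨0, hd⟩
      simp at this
    obtain ⟨c, hc⟩ := Module.End.exists_eigenvalue (T.mulVecLin)
    obtain ⟨v, hv⟩ := hc.exists_hasEigenvector
    refine ⟨c, ?_⟩
    set T' := T - c • (1 : Matrix (Fin d) (Fin d) ℂ) with hT'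
    have hcomm : ∀ g : G, D g * T' = T' * D g := by
      intro g
      rw [hT', mul_sub, sub_mul, hT g]
      congr 1
      rw [Matrix.mul_smul, Matrix.smul_mul, mul_one, one_mul]
    rcases inter_ker hirr hcomm with h | h
    · rw [← sub_eq_zero]
      exact h
    · exfalso
      have hmem : v ∈ LinearMap.ker T'.mulVecLin := by
        have happ : T.mulVec v = c • v := hv.apply_eq_smul
        simp only [LinearMap.mem_ker, Matrix.mulVecLin_apply, hT', Matrix.sub_mulVec,
          Matrix.smul_mulVec, Matrix.one_mulVec, happ, sub_self]
      rw [h] at hmem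
      exact hv.right (by simpa using hmem)

lemma mul_std_mul_apply {d₁ d₂ : ℕ} (M : Matrix (Fin d₁) (Fin d₁) ℂ)
    (N : Matrix (Fin d₂) (Fin d₂) ℂ) (i j : Fin d₁) (l k : Fin d₂) :
    (M * Matrix.single j l (1 : ℂ) * N) i k = M i j * N l k := by
  rw [Matrix.mul_apply]
  have : ∀ b : Fin d₂, (M * Matrix.single j l (1 : ℂ)) i b * N b k
      = if b = l then M i j * N l k else 0 := by
    intro b
    rw [Matrix.mul_apply]
    by_cases hb : b = l
    · subst hb
      simp [Matrix.single]
    · simp [Matrix.single, (show l ≠ b from fun h => hb h.symm)]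
      intro h; exact absurd h hb
  rw [Finset.sum_congr rfl (fun b _ => this b)]
  simp

lemma ortho_same (hω : IsCocycle ω) {D : G → Matrix (Fin d) (Fin d) ℂ}
    (hD : IsUnitaryProjRep ω D) (hirr : IsIrred D) (i j k l : Fin d) :
    ∑ g : G, D g i j * star (D g k l)
      = if i = k ∧ j = l then (Fintype.card G : ℂ) / d else 0 := by
  have hd : 0 < d := i.pos
  have hdC : (d : ℂ) ≠ 0 := Nat.cast_ne_zero.mpr hd.ne'
  set X := Matrix.single j l (1 : ℂ) with hX
  set T := ∑ g : G, D g * X * (D g)ᴴ with hT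
  obtain ⟨c, hc⟩ := commutant_scalar hirr T (fun h => avg_intertwine hω hD hD X h)
  have htr : Matrix.trace T = (Fintype.card G : ℂ) * Matrix.trace X := by
    rw [hT, Matrix.trace_sum,
      Finset.sum_congr rfl (fun g _ => (by
        rw [Matrix.trace_mul_cycle, rep_star_mul hD, Matrix.one_mul] :
        Matrix.trace (D g * X * (D g)ᴴ) = Matrix.trace X))]
    simp [Finset.card_univ, mul_comm]
  have htrX : Matrix.trace X = if j = l then 1 else 0 := by
    by_cases hjl : j = l
    · subst hjl
      simp [hX, Matrix.trace, Matrix.diag, Matrix.single, Finset.sum_ite_eq]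
    · have hz : ∀ x : Fin d, (if j = x ∧ l = x then (1:ℂ) else 0) = 0 := by
        intro x
        rw [if_neg]
        rintro ⟨rfl, rfl⟩
        exact hjl rfl
      simp [hX, Matrix.trace, Matrix.diag, Matrix.single, hz]
      exact hjl
  have htrc : Matrix.trace T = c * d := by
    rw [hc]
    simp [Matrix.trace_smul, Matrix.trace_one, mul_comm]
  have hcval : c = (Fintype.card G : ℂ) * (if j = l then 1 else 0) / d := by
    rw [eq_div_iff hdC, ← htrc, htr, htrX]
  have hent : T i k = ∑ g : G, D g i j * star (D g k l) := by
    rw [hT, Matrix.sum_apply]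
    refine Finset.sum_congr rfl (fun g _ => ?_)
    rw [mul_std_mul_apply, Matrix.conjTranspose_apply]
  rw [← hent, hc]
  rw [Matrix.smul_apply, Matrix.one_apply, hcval]
  by_cases hik : i = k <;> by_cases hjl : j = l <;> simp [hik, hjl]

lemma ortho_diff (hω : IsCocycle ω) (hD₁ : IsUnitaryProjRep ω D₁)
    (hD₂ : IsUnitaryProjRep ω D₂) (hirr₁ : IsIrred D₁) (hirr₂ : IsIrred D₂)
    (hne : ¬ ProjEquiv D₁ D₂) (i : Fin d₁) (j : Fin d₁) (k l : Fin d₂) :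
    ∑ g : G, D₁ g i j * star (D₂ g k l) = 0 := by
  set X := Matrix.single j l (1 : ℂ) with hX
  set T := ∑ g : G, D₁ g * X * (D₂ g)ᴴ with hT
  rcases intertwiner_zero_or_equiv hirr₁ hirr₂
      (fun h => avg_intertwine hω hD₁ hD₂ X h) with h0 | heq
  · have hent : T i k = ∑ g : G, D₁ g i j * star (D₂ g k l) := by
      rw [hT, Matrix.sum_apply]
      refine Finset.sum_congr rfl (fun g _ => ?_)
      rw [mul_std_mul_apply, Matrix.conjTranspose_apply]
    rw [← hent]
    exact congrFun (congrFun h0 i) k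
  · exact absurd heq hne

/-! ### Euclidean space transfer -/

def toE {N : ℕ} : (Fin N → ℂ) ≃ₗ[ℂ] EuclideanSpace ℂ (Fin N) :=
  (WithLp.linearEquiv 2 ℂ _).symm

lemma inner_eq_dot {N : ℕ} (x y : EuclideanSpace ℂ (Fin N)) :
    (inner ℂ x y : ℂ) = star (toE.symm x) ⬝ᵥ (toE.symm y) := by
  rw [PiLp.inner_apply]
  simp [dotProduct, RCLike.inner_apply, Pi.star_apply, toE, WithLp.linearEquiv]
  exact Finset.sum_congr rfl fun _ _ => mul_comm _ _

lemma act_inner {N : ℕ} (M : Matrix (Fin N) (Fin N) ℂ) (hM : Mᴴ * M = 1)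
    (x y : EuclideanSpace ℂ (Fin N)) :
    (inner ℂ (toE (M.mulVec (toE.symm x))) (toE (M.mulVec (toE.symm y))) : ℂ) = inner ℂ x y := by
  rw [inner_eq_dot, inner_eq_dot, LinearEquiv.symm_apply_apply, LinearEquiv.symm_apply_apply]
  rw [star_mulVec, ← dotProduct_mulVec, mulVec_mulVec, hM, one_mulVec]

lemma dot_sum_smul {N m : ℕ} (u : Fin N → ℂ) (c : Fin m → ℂ) (β : Fin m → Fin N → ℂ) :
    u ⬝ᵥ (∑ k : Fin m, c k • β k) = ∑ k : Fin m, c k * (u ⬝ᵥ β k) := by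
  simp only [dotProduct, Finset.sum_apply, Pi.smul_apply, smul_eq_mul, Finset.mul_sum]
  rw [Finset.sum_comm]
  refine Finset.sum_congr rfl fun k _ => Finset.sum_congr rfl fun i _ => by ring

lemma mulVec_sum_smul {N m : ℕ} (M : Matrix (Fin N) (Fin N) ℂ) (c : Fin m → ℂ)
    (β : Fin m → Fin N → ℂ) :
    M.mulVec (∑ k : Fin m, c k • β k) = ∑ k : Fin m, c k • M.mulVec (β k) := by
  simp only [← Matrix.mulVecLin_apply, map_sum, _root_.map_smul]

lemma perp_invariant (hω : IsCocycle ω) {N : ℕ} {D : G → Matrix (Fin N) (Fin N) ℂ}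
    (hD : IsUnitaryProjRep ω D) {q : Submodule ℂ (EuclideanSpace ℂ (Fin N))}
    (hq : ∀ g : G, ∀ x ∈ q, toE ((D g).mulVec (toE.symm x)) ∈ q) :
    ∀ g : G, ∀ x ∈ qᗮ, toE ((D g).mulVec (toE.symm x)) ∈ qᗮ := by
  intro g x hx
  rw [Submodule.mem_orthogonal]
  intro u hu
  set u' : EuclideanSpace ℂ (Fin N) := (ω g g⁻¹)⁻¹ • toE ((D g⁻¹).mulVec (toE.symm u)) with hu'def
  have hu' : u' ∈ q := Submodule.smul_mem q _ (hq g⁻¹ u hu)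
  have hDu' : toE ((D g).mulVec (toE.symm u')) = u := by
    rw [hu'def, _root_.map_smul, LinearEquiv.symm_apply_apply, Matrix.mulVec_smul,
      Matrix.mulVec_mulVec, hD.2 g g⁻¹, mul_inv_cancel, rep_one hω hD,
      Matrix.smul_mulVec, Matrix.one_mulVec, smul_smul,
      inv_mul_cancel₀ (omega_ne_zero hω g g⁻¹), one_smul, LinearEquiv.apply_symm_apply]
  have h1 : (inner ℂ u (toE ((D g).mulVec (toE.symm x))) : ℂ)
      = inner ℂ (toE ((D g).mulVec (toE.symm u'))) (toE ((D g).mulVec (toE.symm x))) := by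
    rw [hDu']
  rw [h1, act_inner (D g) (rep_star_mul hD g)]
  exact hx u' hu'

variable {A : Type} [Fintype A]

/-- matrix coefficient functions of the family -/
def famFun (dfam : A → ℕ) (Dfam : ∀ α : A, G → Matrix (Fin (dfam α)) (Fin (dfam α)) ℂ) :
    (Σ α : A, Fin (dfam α) × Fin (dfam α)) → (G → ℂ) :=
  fun s g => Dfam s.1 g s.2.1 s.2.2

lemma coeff_equiv_mem (dfam : A → ℕ)
    (Dfam : ∀ α : A, G → Matrix (Fin (dfam α)) (Fin (dfam α)) ℂ)
    {e : ℕ} {D : G → Matrix (Fin e) (Fin e) ℂ} {α : A}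
    (heq : ProjEquiv D (Dfam α)) (k l : Fin e) :
    (fun g => D g k l) ∈ Submodule.span ℂ (Set.range (famFun dfam Dfam)) := by
  obtain ⟨h, S, hS, hEq⟩ := heq
  have hback : ∀ g, Matrix.reindex (finCongr h) (finCongr h) (D g) = S * Dfam α g * S⁻¹ := by
    intro g
    rw [hEq g]
    rw [Matrix.mul_assoc, Matrix.mul_assoc, Matrix.mul_nonsing_inv S hS, Matrix.mul_one,
      ← Matrix.mul_assoc, Matrix.mul_nonsing_inv S hS, Matrix.one_mul]
  have hkl : (fun g => D g k l)
      = ∑ u : Fin (dfam α), ∑ v : Fin (dfam α),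
        (S (finCongr h k) u * S⁻¹ v (finCongr h l)) • famFun dfam Dfam ⟨α, u, v⟩ := by
    funext g
    have h1 : D g k l = (S * Dfam α g * S⁻¹) (finCongr h k) (finCongr h l) := by
      rw [← hback g]
      simp [Matrix.reindex_apply, Matrix.submatrix_apply]
    rw [h1]
    simp only [Finset.sum_apply, Pi.smul_apply, smul_eq_mul, famFun]
    rw [Matrix.mul_apply]
    rw [Finset.sum_comm]
    refine Finset.sum_congr rfl fun u _ => ?_
    rw [Matrix.mul_apply, Finset.sum_mul]
    refine Finset.sum_congr rfl fun v _ => by ring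
  rw [hkl]
  refine Submodule.sum_mem _ fun u _ => Submodule.sum_mem _ fun v _ =>
    Submodule.smul_mem _ _ (Submodule.subset_span ⟨⟨α, u, v⟩, rfl⟩)

lemma coeff_mem_span (hω : IsCocycle ω) (dfam : A → ℕ)
    (Dfam : ∀ α : A, G → Matrix (Fin (dfam α)) (Fin (dfam α)) ℂ)
    (hcomplete : ∀ (e : ℕ) (D : G → Matrix (Fin e) (Fin e) ℂ),
      IsUnitaryProjRep ω D → IsIrred D → ∃ α, ProjEquiv D (Dfam α))
    (n : ℕ) :
    ∀ {N : ℕ} (D : G → Matrix (Fin N) (Fin N) ℂ), IsUnitaryProjRep ω D →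
    ∀ (p : Submodule ℂ (EuclideanSpace ℂ (Fin N))),
      Module.finrank ℂ p ≤ n →
      (∀ g : G, ∀ x ∈ p, toE ((D g).mulVec (toE.symm x)) ∈ p) →
      ∀ v ∈ p, ∀ w : Fin N → ℂ,
      (fun g => w ⬝ᵥ (D g).mulVec (toE.symm v))
        ∈ Submodule.span ℂ (Set.range (famFun dfam Dfam)) := by
  induction n with
  | zero =>
    intro N D hD p hp hinv v hv w
    have hpbot : p = ⊥ := Submodule.finrank_eq_zero.mp (Nat.le_zero.mp hp)
    have hv0 : v = 0 := by simpa [hpbot] using hv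
    have : (fun g => w ⬝ᵥ (D g).mulVec (toE.symm v)) = 0 := by
      funext g
      simp [hv0]
    rw [this]
    exact Submodule.zero_mem _
  | succ n ih =>
    intro N D hD p hp hinv v hv w
    by_cases hsub : ∃ q : Submodule ℂ (EuclideanSpace ℂ (Fin N)),
        (q ≤ p ∧ (∀ g : G, ∀ x ∈ q, toE ((D g).mulVec (toE.symm x)) ∈ q)) ∧ q ≠ ⊥ ∧ q ≠ p
    · obtain ⟨q, ⟨hqp, hqinv⟩, hqbot, hqne⟩ := hsub
      obtain ⟨v₁, hv₁, v₂, hv₂, hvsum⟩ := q.exists_add_mem_mem_orthogonal v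
      have hfinq : Module.finrank ℂ q ≤ n := by
        have := Submodule.finrank_lt_finrank_of_lt (lt_of_le_of_ne hqp hqne)
        omega
      have hqpos : 0 < Module.finrank ℂ q := by
        rcases Nat.eq_zero_or_pos (Module.finrank ℂ q) with h0 | h0
        · exact absurd (Submodule.finrank_eq_zero.mp h0) hqbot
        · exact h0
      set r : Submodule ℂ (EuclideanSpace ℂ (Fin N)) := p ⊓ qᗮ with hrdef
      have hv₂r : v₂ ∈ r := by
        refine ⟨?_, hv₂⟩
        have hveq : v₂ = v - v₁ := by rw [hvsum]; abel
        rw [hveq]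
        exact Submodule.sub_mem p hv (hqp hv₁)
      have hbot : r ⊓ q = ⊥ := by
        rw [eq_bot_iff]
        intro x hx
        have : x = 0 := inner_self_eq_zero.mp ((q.mem_orthogonal x).mp hx.1.2 x hx.2)
        simp [this]
      have hsup : r ⊔ q ≤ p := sup_le inf_le_left hqp
      have hsum2 := Submodule.finrank_sup_add_finrank_inf_eq r q
      have h2 : Module.finrank ℂ ↥(r ⊔ q) ≤ n + 1 :=
        le_trans (Submodule.finrank_mono hsup) hp
      have h3 : Module.finrank ℂ ↥(r ⊓ q) = 0 := by
        rw [hbot]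
        exact finrank_bot ℂ _
      have hfinr : Module.finrank ℂ r ≤ n := by omega
      have hrinv : ∀ g : G, ∀ x ∈ r, toE ((D g).mulVec (toE.symm x)) ∈ r := by
        intro g x hx
        exact ⟨hinv g x hx.1, perp_invariant hω hD hqinv g x hx.2⟩
      have hsplit : (fun g => w ⬝ᵥ (D g).mulVec (toE.symm v))
          = (fun g => w ⬝ᵥ (D g).mulVec (toE.symm v₁))
            + (fun g => w ⬝ᵥ (D g).mulVec (toE.symm v₂)) := by
        funext g
        simp only [Pi.add_apply, hvsum, map_add, Matrix.mulVec_add, dotProduct_add]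
      rw [hsplit]
      exact Submodule.add_mem _ (ih D hD q hfinq hqinv v₁ hv₁ w)
        (ih D hD r hfinr hrinv v₂ hv₂r w)
    · -- p has no proper invariant subspace
      have hmin : ∀ q : Submodule ℂ (EuclideanSpace ℂ (Fin N)), q ≤ p →
          (∀ g : G, ∀ x ∈ q, toE ((D g).mulVec (toE.symm x)) ∈ q) → q = ⊥ ∨ q = p := by
        intro q hqp hqinv
        by_contra hcon
        push_neg at hcon
        exact hsub ⟨q, ⟨hqp, hqinv⟩, hcon.1, hcon.2⟩
      by_cases hpbot : p = ⊥
      · have hv0 : v = 0 := by simpa [hpbot] using hv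
        have hz : (fun g => w ⬝ᵥ (D g).mulVec (toE.symm v)) = 0 := by
          funext g
          simp [hv0]
        rw [hz]
        exact Submodule.zero_mem _
      set e := Module.finrank ℂ ↥p with hedef
      let b : OrthonormalBasis (Fin e) ℂ ↥p := stdOrthonormalBasis ℂ ↥p
      let β : Fin e → (Fin N → ℂ) := fun k => toE.symm ((b k : EuclideanSpace ℂ (Fin N)))
      have hβmem : ∀ k, toE (β k) ∈ p := by
        intro k
        have h : toE (β k) = ((b k : ↥p) : EuclideanSpace ℂ (Fin N)) := by
          show toE (toE.symm _) = _
          rw [LinearEquiv.apply_symm_apply]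
        rw [h]
        exact (b k).2
      have hβorth : ∀ k l, star (β k) ⬝ᵥ β l = if k = l then (1:ℂ) else 0 := by
        intro k l
        have h := (orthonormal_iff_ite.mp b.orthonormal) k l
        rw [Submodule.coe_inner, inner_eq_dot] at h
        exact h
      have hexp : ∀ x : Fin N → ℂ, toE x ∈ p → x = ∑ k : Fin e, (star (β k) ⬝ᵥ x) • β k := by
        intro x hx
        have h0 := b.sum_repr ⟨toE x, hx⟩
        have h1 : ∀ k, b.repr ⟨toE x, hx⟩ k = star (β k) ⬝ᵥ x := by
          intro k
          rw [b.repr_apply_apply, Submodule.coe_inner, inner_eq_dot,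
            LinearEquiv.symm_apply_apply]
        have h2 := congrArg (fun y : ↥p => toE.symm ((y : ↥p) : EuclideanSpace ℂ (Fin N))) h0
        simp only [Submodule.coe_sum, Submodule.coe_smul, map_sum, _root_.map_smul,
          LinearEquiv.symm_apply_apply, h1] at h2
        exact h2.symm
      let Dp : G → Matrix (Fin e) (Fin e) ℂ :=
        fun g => Matrix.of fun k l => star (β k) ⬝ᵥ (D g).mulVec (β l)
      have hDpapp : ∀ g k l, Dp g k l = star (β k) ⬝ᵥ (D g).mulVec (β l) := fun _ _ _ => rfl
      have hDβ : ∀ g l, toE ((D g).mulVec (β l)) ∈ p := by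
        intro g l
        have h := hinv g (toE (β l)) (hβmem l)
        rwa [LinearEquiv.symm_apply_apply] at h
      have hDβexp : ∀ g l, (D g).mulVec (β l) = ∑ k : Fin e, Dp g k l • β k := by
        intro g l
        exact hexp _ (hDβ g l)
      have hDprep : ∀ g h, Dp g * Dp h = ω g h • Dp (g * h) := by
        intro g h
        ext k l
        rw [Matrix.mul_apply]
        have hL : ∑ m : Fin e, Dp g k m * Dp h m l
            = star (β k) ⬝ᵥ (D g).mulVec ((D h).mulVec (β l)) := by
          rw [hDβexp h l, mulVec_sum_smul, dot_sum_smul]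
          refine Finset.sum_congr rfl fun m _ => ?_
          rw [hDpapp]
          ring
        rw [hL, Matrix.mulVec_mulVec, hD.2 g h, Matrix.smul_mulVec, dotProduct_smul]
        rw [Matrix.smul_apply, hDpapp]
      have hDpunit : ∀ g, Dp g ∈ Matrix.unitaryGroup (Fin e) ℂ := by
        intro g
        rw [Matrix.mem_unitaryGroup_iff']
        ext k l
        rw [Matrix.mul_apply, Matrix.one_apply]
        have hterm : ∀ m, (star (Dp g)) k m * Dp g m l
            = (star (β m) ⬝ᵥ (D g).mulVec (β l)) * (star ((D g).mulVec (β k)) ⬝ᵥ β m) := by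
          intro m
          rw [Matrix.star_apply, hDpapp, hDpapp, ← star_dotProduct]
          ring
        have hy := hexp ((D g).mulVec (β l)) (hDβ g l)
        calc ∑ m : Fin e, (star (Dp g)) k m * Dp g m l
            = ∑ m : Fin e, (star (β m) ⬝ᵥ (D g).mulVec (β l))
                * (star ((D g).mulVec (β k)) ⬝ᵥ β m) := by
              exact Finset.sum_congr rfl fun m _ => hterm m
          _ = star ((D g).mulVec (β k)) ⬝ᵥ
                (∑ m : Fin e, (star (β m) ⬝ᵥ (D g).mulVec (β l)) • β m) := by
              rw [dot_sum_smul]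
          _ = star ((D g).mulVec (β k)) ⬝ᵥ ((D g).mulVec (β l)) := by rw [← hy]
          _ = star (β k) ⬝ᵥ β l := by
              rw [star_mulVec, ← dotProduct_mulVec, mulVec_mulVec, rep_star_mul hD, one_mulVec]
          _ = if k = l then 1 else 0 := hβorth k l
      have hβindep : ∀ c : Fin e → ℂ, ∑ k : Fin e, c k • β k = 0 → c = 0 := by
        intro c hc
        funext m
        have h := congrArg (fun x => star (β m) ⬝ᵥ x) hc
        simp only [dot_sum_smul, dotProduct_zero] at h
        have h2 : ∀ k, c k * (star (β m) ⬝ᵥ β k) = if m = k then c k else 0 := by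
          intro k
          rw [hβorth]
          by_cases hmk : m = k <;> simp [hmk, eq_comm]
        rw [Finset.sum_congr rfl fun k _ => h2 k, Finset.sum_ite_eq] at h
        simpa using h
      let J : (Fin e → ℂ) →ₗ[ℂ] EuclideanSpace ℂ (Fin N) :=
        { toFun := fun c => toE (∑ k : Fin e, c k • β k)
          map_add' := by
            intro c₁ c₂
            show toE (∑ k : Fin e, (c₁ + c₂) k • β k)
              = toE (∑ k : Fin e, c₁ k • β k) + toE (∑ k : Fin e, c₂ k • β k)
            rw [← map_add]
            congr 1
            rw [← Finset.sum_add_distrib]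
            refine Finset.sum_congr rfl fun k _ => ?_
            rw [Pi.add_apply, add_smul]
          map_smul' := by
            intro a c
            show toE (∑ k : Fin e, (a • c) k • β k)
              = a • toE (∑ k : Fin e, c k • β k)
            rw [← _root_.map_smul]
            congr 1
            rw [Finset.smul_sum]
            refine Finset.sum_congr rfl fun k _ => ?_
            rw [Pi.smul_apply, smul_smul, smul_eq_mul] }
      have hJapp : ∀ c, J c = toE (∑ k : Fin e, c k • β k) := fun _ => rfl
      have hJinj : Function.Injective J := by
        intro c₁ c₂ h
        rw [hJapp, hJapp] at h
        have h2 : ∑ k : Fin e, (c₁ - c₂) k • β k = 0 := by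
          simp only [Pi.sub_apply, sub_smul, Finset.sum_sub_distrib]
          rw [sub_eq_zero]
          exact toE.injective h
        have := hβindep _ h2
        exact sub_eq_zero.mp this
      have hDpirr : IsIrred Dp := by
        intro s hs
        have hqp : Submodule.map J s ≤ p := by
          rintro x ⟨c, hc, rfl⟩
          rw [hJapp, map_sum]
          simp only [_root_.map_smul]
          exact Submodule.sum_mem _ fun k _ => Submodule.smul_mem _ _ (hβmem k)
        have hkey : ∀ (g : G) (c : Fin e → ℂ),
            toE ((D g).mulVec (toE.symm (J c))) = J ((Dp g).mulVec c) := by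
          intro g c
          rw [hJapp, hJapp, LinearEquiv.symm_apply_apply]
          congr 1
          rw [mulVec_sum_smul]
          rw [Finset.sum_congr rfl fun k (_ : k ∈ Finset.univ) =>
            congrArg (c k • ·) (hDβexp g k)]
          simp only [Finset.smul_sum, smul_smul]
          rw [Finset.sum_comm]
          refine Finset.sum_congr rfl fun m _ => ?_
          rw [← Finset.sum_smul]
          congr 1
          simp only [Matrix.mulVec, dotProduct]
          exact Finset.sum_congr rfl fun k _ => by ring
        have hqinv : ∀ g : G, ∀ x ∈ Submodule.map J s,
            toE ((D g).mulVec (toE.symm x)) ∈ Submodule.map J s := by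
          rintro g x ⟨c, hc, rfl⟩
          exact ⟨(Dp g).mulVec c, hs g c hc, (hkey g c).symm⟩
        rcases hmin (Submodule.map J s) hqp hqinv with hbot | htop
        · left
          rw [eq_bot_iff]
          intro c hc
          have hmem : J c ∈ Submodule.map J s := ⟨c, hc, rfl⟩
          rw [hbot, Submodule.mem_bot] at hmem
          have : c = 0 := hJinj (by rw [hmem, map_zero])
          simp [this]
        · right
          apply Submodule.eq_top_of_finrank_eq
          have h1 : Module.finrank ℂ ↥s = Module.finrank ℂ ↥(Submodule.map J s) :=
            (Submodule.equivMapOfInjective J hJinj s).finrank_eq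
          rw [h1, htop, ← hedef]
          simp
      obtain ⟨α, hα⟩ := hcomplete e Dp ⟨hDpunit, hDprep⟩ hDpirr
      have hcoeff : ∀ k l : Fin e,
          (fun g => Dp g k l) ∈ Submodule.span ℂ (Set.range (famFun dfam Dfam)) :=
        fun k l => coeff_equiv_mem dfam Dfam hα k l
      have hvexp : toE.symm v = ∑ l : Fin e, (star (β l) ⬝ᵥ toE.symm v) • β l := by
        apply hexp
        rw [LinearEquiv.apply_symm_apply]
        exact hv
      have hfinal : (fun g => w ⬝ᵥ (D g).mulVec (toE.symm v))
          = ∑ l : Fin e, ∑ k : Fin e,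
              ((star (β l) ⬝ᵥ toE.symm v) * (w ⬝ᵥ β k)) • (fun g => Dp g k l) := by
        funext g
        simp only [Finset.sum_apply, Pi.smul_apply, smul_eq_mul]
        conv_lhs => rw [hvexp, mulVec_sum_smul, dot_sum_smul]
        refine Finset.sum_congr rfl fun l _ => ?_
        rw [hDβexp g l, dot_sum_smul, Finset.mul_sum]
        refine Finset.sum_congr rfl fun k _ => by ring
      rw [hfinal]
      exact Submodule.sum_mem _ fun l _ => Submodule.sum_mem _ fun k _ =>
        Submodule.smul_mem _ _ (hcoeff k l)

lemma projReg_mul [DecidableEq G] (hω : IsCocycle ω) (g h : G) :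
    projRegRep ω g * projRegRep ω h = ω g h • projRegRep ω (g * h) := by
  ext x y
  rw [Matrix.mul_apply, Matrix.smul_apply]
  rw [Finset.sum_eq_single (h * y)]
  · simp only [projRegRep, if_true]
    by_cases hx : x = g * (h * y)
    · rw [if_pos hx, if_pos (by rw [hx, mul_assoc]), smul_eq_mul]
      exact (hω.2.2.2 g h y).symm
    · rw [if_neg hx, if_neg (fun hc => hx (by rw [hc, mul_assoc])), zero_mul, smul_zero]
  · intro z _ hz
    simp only [projRegRep]
    rw [if_neg hz, mul_zero]
  · intro hmem
    exact absurd (Finset.mem_univ _) hmem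

lemma projReg_star_mul [DecidableEq G] (hω : IsCocycle ω) (g : G) :
    star (projRegRep ω g) * projRegRep ω g = 1 := by
  ext y y'
  rw [Matrix.mul_apply, Matrix.one_apply]
  rw [Finset.sum_eq_single (g * y)]
  · simp only [Matrix.star_apply, projRegRep, if_true]
    by_cases hyy : y = y'
    · subst hyy
      rw [if_pos rfl, conj_omega_mul hω, if_pos rfl]
    · rw [if_neg (fun hc => hyy (mul_left_cancel hc)), if_neg hyy, mul_zero]
  · intro z _ hz
    simp only [Matrix.star_apply, projRegRep]
    rw [if_neg hz, star_zero, zero_mul]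
  · intro hmem
    exact absurd (Finset.mem_univ _) hmem

end ProjAux

/-- dimension equation for projective irreps. -/
theorem projective_dimension_equation
    {G : Type} [Group G] [Fintype G]
    (ω : G → G → ℂ) (hω : IsCocycle ω)
    {A : Type} [Fintype A]
    (dfam : A → ℕ)
    (Dfam : ∀ α : A, G → Matrix (Fin (dfam α)) (Fin (dfam α)) ℂ)
    (hrep : ∀ α, IsUnitaryProjRep ω (Dfam α))
    (hirr : ∀ α, IsIrred (Dfam α))
    (hinequiv : ∀ α β, α ≠ β → ¬ ProjEquiv (Dfam α) (Dfam β))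
    (hcomplete : ∀ (d : ℕ) (D : G → Matrix (Fin d) (Fin d) ℂ),
      IsUnitaryProjRep ω D → IsIrred D → ∃ α, ProjEquiv D (Dfam α)) :
    ∑ α : A, (dfam α) ^ 2 = Fintype.card G := by
  classical
  set F := ProjAux.famFun dfam Dfam with hF
  -- linear independence of the matrix coefficients
  have hind : LinearIndependent ℂ F := by
    rw [Fintype.linearIndependent_iff]
    intro c hc s₀
    obtain ⟨α, i, j⟩ := s₀
    have hkey : ∀ s : (Σ α : A, Fin (dfam α) × Fin (dfam α)),
        (∑ g : G, F s g * star (F ⟨α, (i, j)⟩ g))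
          = if s = ⟨α, (i, j)⟩ then (Fintype.card G : ℂ) / (dfam α) else 0 := by
      rintro ⟨β, k, l⟩
      by_cases hβ : β = α
      · subst hβ
        have horto := ProjAux.ortho_same hω (hrep β) (hirr β) k l i j
        rw [show (∑ g : G, F ⟨β, (k, l)⟩ g * star (F ⟨β, (i, j)⟩ g))
            = ∑ g : G, Dfam β g k l * star (Dfam β g i j) from rfl, horto]
        by_cases h1 : k = i ∧ l = j
        · obtain ⟨rfl, rfl⟩ := h1
          rw [if_pos ⟨rfl, rfl⟩, if_pos rfl]
        · rw [if_neg h1, if_neg (fun hc2 => ?_)]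
          apply h1
          have h2 : ((k, l) : Fin (dfam β) × Fin (dfam β)) = (i, j) :=
            eq_of_heq (Sigma.mk.inj_iff.mp hc2).2
          exact ⟨(Prod.ext_iff.mp h2).1, (Prod.ext_iff.mp h2).2⟩
      · have horto := ProjAux.ortho_diff hω (hrep β) (hrep α) (hirr β) (hirr α)
          (hinequiv β α hβ) k l i j
        rw [show (∑ g : G, F ⟨β, (k, l)⟩ g * star (F ⟨α, (i, j)⟩ g))
            = ∑ g : G, Dfam β g k l * star (Dfam α g i j) from rfl, horto,
          if_neg (fun hc2 => hβ (congrArg Sigma.fst hc2))]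
    have h0 : ∑ g : G, (∑ s, c s • F s) g * star (F ⟨α, (i, j)⟩ g) = 0 := by
      rw [hc]
      simp
    have h1 : ∑ g : G, (∑ s, c s • F s) g * star (F ⟨α, (i, j)⟩ g)
        = ∑ s, c s * (∑ g : G, F s g * star (F ⟨α, (i, j)⟩ g)) := by
      simp only [Finset.sum_apply, Pi.smul_apply, smul_eq_mul, Finset.sum_mul,
        Finset.mul_sum]
      rw [Finset.sum_comm]
      exact Finset.sum_congr rfl fun s _ => Finset.sum_congr rfl fun g _ => by ring
    rw [h1, Finset.sum_congr rfl (fun s _ => by rw [hkey s])] at h0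
    simp only [mul_ite, mul_zero, Finset.sum_ite_eq', Finset.mem_univ, if_true] at h0
    have hcard : (Fintype.card G : ℂ) ≠ 0 := Nat.cast_ne_zero.mpr Fintype.card_ne_zero
    have hd : ((dfam α : ℂ)) ≠ 0 := Nat.cast_ne_zero.mpr i.pos.ne'
    rcases mul_eq_zero.mp h0 with h | h
    · exact h
    · exact absurd h (div_ne_zero hcard hd)
  -- spanning via the regular representation
  set eqv : G ≃ Fin (Fintype.card G) := Fintype.equivFin G with heqv
  set Dreg : G → Matrix (Fin (Fintype.card G)) (Fin (Fintype.card G)) ℂ :=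
    fun g => (projRegRep ω g).submatrix ⇑eqv.symm ⇑eqv.symm with hDreg
  have hDregrep : IsUnitaryProjRep ω Dreg := by
    constructor
    · intro g
      rw [Matrix.mem_unitaryGroup_iff']
      have hstar : star (Dreg g) = (star (projRegRep ω g)).submatrix ⇑eqv.symm ⇑eqv.symm := by
        ext i j
        rfl
      rw [hstar, hDreg, Matrix.submatrix_mul_equiv _ _ _ eqv.symm _,
        ProjAux.projReg_star_mul hω g, Matrix.submatrix_one_equiv]
    · intro g h
      show (projRegRep ω g).submatrix ⇑eqv.symm ⇑eqv.symm
          * (projRegRep ω h).submatrix ⇑eqv.symm ⇑eqv.symm = _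
      rw [Matrix.submatrix_mul_equiv _ _ _ eqv.symm _, ProjAux.projReg_mul hω g h]
      rfl
  have hdelta : ∀ h : G, (fun g => if h = g then (1:ℂ) else 0)
      ∈ Submodule.span ℂ (Set.range F) := by
    intro h
    have hfr : Module.finrank ℂ
        (⊤ : Submodule ℂ (EuclideanSpace ℂ (Fin (Fintype.card G)))) ≤ Fintype.card G := by
      rw [finrank_top, finrank_euclideanSpace]
      simp
    have hmem := ProjAux.coeff_mem_span hω dfam Dfam hcomplete (Fintype.card G)
      Dreg hDregrep ⊤ hfr (fun g x _ => Submodule.mem_top)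
      (ProjAux.toE (Pi.single (eqv 1) 1)) Submodule.mem_top (Pi.single (eqv h) 1)
    have heq2 : (fun g => (Pi.single (eqv h) (1:ℂ) : Fin (Fintype.card G) → ℂ)
          ⬝ᵥ (Dreg g).mulVec (ProjAux.toE.symm (ProjAux.toE (Pi.single (eqv 1) 1))))
        = (fun g => if h = g then (1:ℂ) else 0) := by
      funext g
      rw [LinearEquiv.symm_apply_apply, single_dotProduct, Matrix.mulVec_single]
      simp only [hDreg, Matrix.submatrix_apply, Equiv.symm_apply_apply, one_mul, mul_one]
      simp only [Pi.smul_apply, MulOpposite.op_one, one_smul, Matrix.col_apply,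
        Matrix.submatrix_apply, Equiv.symm_apply_apply]
      simp only [projRegRep, mul_one, hω.2.2.1]
    rw [heq2] at hmem
    exact hmem
  have hspan_top : Submodule.span ℂ (Set.range F) = ⊤ := by
    rw [eq_top_iff]
    intro f _
    have hfeq : f = ∑ h : G, f h • (fun g => if h = g then (1:ℂ) else 0) := by
      funext g
      simp only [Finset.sum_apply, Pi.smul_apply, smul_eq_mul, mul_ite, mul_one, mul_zero]
      rw [Finset.sum_ite_eq' Finset.univ g f]
      simp
    rw [hfeq]
    exact Submodule.sum_mem _ fun h _ => Submodule.smul_mem _ _ (hdelta h)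
  -- counting
  have hcount := finrank_span_eq_card hind
  rw [hspan_top, finrank_top] at hcount
  have h2 : Module.finrank ℂ (G → ℂ) = Fintype.card G := by simp
  have h3 : Fintype.card (Σ α : A, Fin (dfam α) × Fin (dfam α)) = ∑ α : A, (dfam α)^2 := by
    rw [Fintype.card_sigma]
    refine Finset.sum_congr rfl fun α _ => ?_
    simp [sq]
  rw [← h3, ← hcount, h2]
end
end

section
/- Symmetry fractionalization by the Ω gate: let G be a finite group, ω a normalized unitary 2-cocycle on G, M g the regular representation matrices, 𝒟 g the ω-projective regular representation matrices, and Ω ∈ Matrix (G × G) (G × G) ℂ the diagonal matrix whose diagonal entry at index (g_l, g_r) is ω g_r (g_r⁻¹ * g_l). Then Ω is unitary and Ω * ((M g) ⊗ (M g)) * Ωᴴ = (𝒟 g) ⊗ conj(𝒟 g) for every g ∈ G, where conj denotes entrywise complex conjugation. -/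
open Matrix Kronecker BigOperators

noncomputable section

/-- symmetry fractionalization by the `Ω` gate. -/
theorem omega_gate_fractionalization
    {G : Type} [Group G] [Fintype G] [DecidableEq G]
    (ω : G → G → ℂ) (hω : IsCocycle ω)
    (Ω : Matrix (G × G) (G × G) ℂ)
    (hΩ : Ω = Matrix.diagonal (fun p : G × G => ω p.2 (p.2⁻¹ * p.1))) :
    Ω ∈ Matrix.unitaryGroup (G × G) ℂ ∧
    ∀ g : G, Ω * (regRep G g ⊗ₖ regRep G g) * Ωᴴ
      = projRegRep ω g ⊗ₖ (projRegRep ω g).map (starRingEnd ℂ) := by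

  obtain ⟨habs, h1, hr1, hcoc⟩ := hω
  have hne : ∀ x y : G, ω x y ≠ 0 := by
    intro x y h
    have := habs x y
    rw [h] at this
    simp at this
  have hconj : ∀ x y : G, (starRingEnd ℂ) (ω x y) = (ω x y)⁻¹ := by
    intro x y
    refine eq_inv_of_mul_eq_one_right ?_
    rw [Complex.mul_conj]
    norm_cast
    rw [← Complex.sq_norm, habs]
    norm_num
  constructor
  · rw [Matrix.mem_unitaryGroup_iff, hΩ, star_eq_conjTranspose,
      Matrix.diagonal_conjTranspose, Matrix.diagonal_mul_diagonal]
    ext i j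
    rcases eq_or_ne i j with h | h
    · subst h
      simp [Pi.star_apply, hconj, mul_inv_cancel₀ (hne _ _)]
    · simp [Matrix.diagonal_apply_ne _ h, Matrix.one_apply_ne h]
  · intro g
    subst hΩ
    ext ⟨a₁, a₂⟩ ⟨b₁, b₂⟩
    rw [Matrix.diagonal_conjTranspose, Matrix.mul_diagonal, Matrix.diagonal_mul]
    simp only [Matrix.kroneckerMap_apply, regRep, projRegRep, Matrix.map_apply,
      Pi.star_apply]
    by_cases h₁ : a₁ = g * b₁
    · by_cases h₂ : a₂ = g * b₂
      · subst h₁; subst h₂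
        have hk : (g * b₂)⁻¹ * (g * b₁) = b₂⁻¹ * b₁ := by group
        simp only [eq_self_iff_true, if_true, one_mul, mul_one, hk, Complex.star_def,
          hconj]
        have hc := hcoc g b₂ (b₂⁻¹ * b₁)
        rw [mul_inv_cancel_left] at hc
        rw [← div_eq_mul_inv, ← div_eq_mul_inv, div_eq_div_iff (hne _ _) (hne _ _)]
        linear_combination hc
      · simp [h₂]
    · simp [h₁]
end
end

section
/- The Ω gate commutes with time reversal: let G be a finite group, σ : G → G a group automorphism with σ ∘ σ = id, and ω a normalized unitary 2-cocycle on G satisfying ω g h * ω (σ g) (σ h) = 1 for all g, h ∈ G. Let P_σ ∈ Matrix G G ℂ be the permutation matrix with (P_σ)_{h,h'} = 1 if h = σ h' and 0 otherwise, and let Ω ∈ Matrix (G × G) (G × G) ℂ be the diagonal matrix whose diagonal entry at (g_l, g_r) is ω g_r (g_r⁻¹ * g_l). Then (P_σ ⊗ P_σ) * conj(Ω) * (P_σ ⊗ P_σ) = Ω, where conj denotes entrywise complex conjugation. -/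
open Matrix Kronecker BigOperators

noncomputable section

/-- the `Ω` gate commutes with time reversal. -/
theorem omega_gate_time_reversal_invariant
    {G : Type} [Group G] [Fintype G] [DecidableEq G]
    (σ : G →* G) (hσ : ∀ g, σ (σ g) = g)
    (ω : G → G → ℂ) (hω : IsCocycle ω)
    (hωσ : ∀ g h, ω g h * ω (σ g) (σ h) = 1)
    (Pσ : Matrix G G ℂ)
    (hPσ : Pσ = fun h h' => if h = σ h' then 1 else 0)
    (Ω : Matrix (G × G) (G × G) ℂ)
    (hΩ : Ω = Matrix.diagonal (fun p : G × G => ω p.2 (p.2⁻¹ * p.1))) :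
    (Pσ ⊗ₖ Pσ) * Ω.map (starRingEnd ℂ) * (Pσ ⊗ₖ Pσ) = Ω := by
  have key : ∀ g h : G, (starRingEnd ℂ) (ω (σ g) (σ h)) = ω g h := by
    intro g h
    have h1 : ‖ω (σ g) (σ h)‖ = 1 := hω.1 _ _
    have hne : ω (σ g) (σ h) ≠ 0 := by
      intro h0; rw [h0] at h1; simp at h1
    have h2 : (starRingEnd ℂ) (ω (σ g) (σ h)) * ω (σ g) (σ h) = 1 := by
      rw [mul_comm, Complex.mul_conj]
      norm_cast
      rw [Complex.normSq_eq_norm_sq, h1]; norm_num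
    exact mul_right_cancel₀ hne (h2.trans (hωσ g h).symm)
  subst hPσ hΩ
  ext ⟨a, b⟩ ⟨c, d⟩
  simp only [Matrix.mul_apply, kroneckerMap, Matrix.of_apply, Matrix.map_apply,
    Matrix.diagonal_apply, Fintype.sum_prod_type, ite_mul, mul_ite,
    zero_mul, mul_zero, one_mul, mul_one, Finset.sum_ite_eq,
    Finset.sum_ite_eq', Finset.mem_univ, if_true, apply_ite (starRingEnd ℂ),
    map_zero, Prod.mk.injEq]
  by_cases hac : a = c <;> by_cases hbd : b = d <;>
    simp [hac, hbd, hσ]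
  rw [← map_inv, ← _root_.map_mul, key]
end
end

section
/- Vanishing indicator for complex-type irreps: let G be a finite group, σ : G → G a group automorphism with σ ∘ σ = id, and ω : G → G → ℂ with |ω g h| = 1 satisfying ω g h * ω (σ g) (σ h) = 1 for all g, h ∈ G. Let D be an irreducible unitary ω-projective representation of G of dimension d such that D⋆, defined by D⋆ g = conj(D (σ g)), is not equivalent to D. Then the matrix X = (1/|G|) ∑_{g ∈ G} ω (σ g) g • D (σ g * g) is zero; in particular the indicator ι(D) = (1/|G|) ∑_{g ∈ G} ω (σ g) g · Tr(D (σ g * g)) equals 0. -/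
open Matrix Kronecker BigOperators

noncomputable section

/-- the indicator vanishes for complex-type irreps. -/
theorem indicator_vanishes_complex_type
    {G : Type} [Group G] [Fintype G]
    (σ : G →* G) (hσ : ∀ g, σ (σ g) = g)
    (ω : G → G → ℂ) (hω : ∀ g h, ‖ω g h‖ = 1)
    (hωσ : ∀ g h, ω g h * ω (σ g) (σ h) = 1)
    {d : ℕ} (D : G → Matrix (Fin d) (Fin d) ℂ)
    (hD : IsUnitaryProjRep ω D) (hirr : IsIrred D)
    (hne : ¬ ProjEquiv (fun g => (D (σ g)).map (starRingEnd ℂ)) D) :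
    ((Fintype.card G : ℂ))⁻¹ • ∑ g : G, ω (σ g) g • D (σ g * g)
        = (0 : Matrix (Fin d) (Fin d) ℂ) ∧
    ((Fintype.card G : ℂ))⁻¹ * ∑ g : G, ω (σ g) g * Matrix.trace (D (σ g * g)) = 0 := by
  classical
  obtain ⟨hunit, hmul⟩ := hD
  set Dstar : G → Matrix (Fin d) (Fin d) ℂ := fun g => (D (σ g)).map (starRingEnd ℂ)
    with hDstar
  have hωne : ∀ g h : G, ω g h ≠ 0 := by
    intro g h h0
    have := hω g h
    rw [h0, norm_zero] at this
    exact zero_ne_one this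
  have hωinv : ∀ g h : G, ω (σ g) (σ h) = (ω g h)⁻¹ :=
    fun g h => (inv_eq_of_mul_eq_one_right (hωσ g h)).symm
  -- unitarity in the form (map conj) * transpose = 1
  have hmapT : ∀ a : G, (D a).map (starRingEnd ℂ) * (D a)ᵀ = 1 := by
    intro a
    have h5 : D a * star (D a) = 1 := Matrix.mem_unitaryGroup_iff.mp (hunit a)
    rw [Matrix.star_eq_conjTranspose] at h5
    have h6 : (D a).map (starRingEnd ℂ) = ((D a)ᴴ)ᵀ := rfl
    rw [h6, ← Matrix.transpose_mul, h5, Matrix.transpose_one]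
  -- key identity
  have keyT : ∀ g h : G, Dstar h * (D (σ (g * h)))ᵀ = ω g h • (D (σ g))ᵀ := by
    intro g h
    have h1 : D (σ g) * D (σ h) = ω (σ g) (σ h) • D (σ g * σ h) := hmul _ _
    rw [hωinv g h] at h1
    have h2 : σ (g * h) = σ g * σ h := _root_.map_mul σ g h
    have h4 : D (σ (g * h)) = ω g h • (D (σ g) * D (σ h)) := by
      rw [h2, h1, smul_smul, mul_inv_cancel₀ (hωne g h), one_smul]
    rw [h4, Matrix.transpose_smul, Matrix.mul_smul, Matrix.transpose_mul,
      ← Matrix.mul_assoc]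
    have h7 : Dstar h * (D (σ h))ᵀ = 1 := hmapT (σ h)
    rw [h7, Matrix.one_mul]
  -- Schur's lemma
  have schur : ∀ T : Matrix (Fin d) (Fin d) ℂ,
      (∀ h : G, Dstar h * T = T * D h) → T = 0 := by
    intro T hT
    set p := LinearMap.ker T.mulVecLin with hp
    have hinv : ∀ g : G, ∀ v ∈ p, (D g).mulVec v ∈ p := by
      intro g v hv
      rw [hp, LinearMap.mem_ker, Matrix.mulVecLin_apply] at hv ⊢
      rw [Matrix.mulVec_mulVec, ← hT g, ← Matrix.mulVec_mulVec, hv,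
        Matrix.mulVec_zero]
    rcases hirr p hinv with hbot | htop
    · -- T is invertible, contradiction with hne
      exfalso
      have hdet : IsUnit T.det := by
        rw [isUnit_iff_ne_zero]
        intro h0
        obtain ⟨v, hv, hv0⟩ := Matrix.exists_mulVec_eq_zero_iff.mpr h0
        have hvp : v ∈ p := by
          rw [hp, LinearMap.mem_ker, Matrix.mulVecLin_apply]; exact hv0
        rw [hbot, Submodule.mem_bot] at hvp
        exact hv hvp
      apply hne
      refine ⟨rfl, T, hdet, fun g => ?_⟩
      have hre : Matrix.reindex (finCongr (rfl : d = d)) (finCongr rfl) (Dstar g)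
          = Dstar g := by
        simp [Matrix.reindex_apply]
      rw [hre]
      calc D g = 1 * D g := (Matrix.one_mul _).symm
        _ = T⁻¹ * T * D g := by rw [Matrix.nonsing_inv_mul T hdet]
        _ = T⁻¹ * (T * D g) := by rw [Matrix.mul_assoc]
        _ = T⁻¹ * (Dstar g * T) := by rw [hT g]
        _ = T⁻¹ * Dstar g * T := by rw [Matrix.mul_assoc]
    · -- kernel is everything, so T = 0
      ext i j
      have hmem : (Pi.single j 1 : Fin d → ℂ) ∈ p := by
        rw [htop]; trivial
      rw [hp, LinearMap.mem_ker, Matrix.mulVecLin_apply] at hmem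
      have := congrFun hmem i
      simpa [Matrix.mulVec, dotProduct, Pi.single_apply] using this
  -- the averaged operators vanish
  have hTzero : ∀ A : Matrix (Fin d) (Fin d) ℂ,
      ∑ g : G, (D (σ g))ᵀ * A * D g = 0 := by
    intro A
    apply schur
    intro h
    have hterm : ∀ g : G, (D (σ g))ᵀ * A * D g * D h
        = Dstar h * ((D (σ (g * h)))ᵀ * A * D (g * h)) := by
      intro g
      calc (D (σ g))ᵀ * A * D g * D h
          = (D (σ g))ᵀ * A * (D g * D h) := by rw [Matrix.mul_assoc]
        _ = (D (σ g))ᵀ * A * (ω g h • D (g * h)) := by rw [hmul g h]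
        _ = ω g h • ((D (σ g))ᵀ * A * D (g * h)) := by rw [Matrix.mul_smul]
        _ = (ω g h • (D (σ g))ᵀ) * A * D (g * h) := by
            rw [Matrix.smul_mul, Matrix.smul_mul]
        _ = (Dstar h * (D (σ (g * h)))ᵀ) * A * D (g * h) := by rw [keyT g h]
        _ = Dstar h * ((D (σ (g * h)))ᵀ * A) * D (g * h) := by
            rw [Matrix.mul_assoc (Dstar h) ((D (σ (g * h)))ᵀ) A]
        _ = Dstar h * ((D (σ (g * h)))ᵀ * A * D (g * h)) := by
            rw [Matrix.mul_assoc (Dstar h) ((D (σ (g * h)))ᵀ * A) (D (g * h))]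
    rw [Finset.mul_sum, Finset.sum_mul]
    refine Fintype.sum_equiv (Equiv.mulRight h⁻¹) _ _ ?_
    intro x
    simp only [Equiv.coe_mulRight]
    rw [hterm (x * h⁻¹), inv_mul_cancel_right]
  -- entrywise vanishing
  have key2 : ∀ i k j : Fin d, ∑ g : G, D (σ g) i k * D g k j = 0 := by
    intro i k j
    have h0 := congrFun (congrFun (hTzero (Matrix.single i k (1 : ℂ))) k) j
    rw [Matrix.sum_apply] at h0
    have hterm : ∀ g : G,
        ((D (σ g))ᵀ * Matrix.single i k (1 : ℂ) * D g) k j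
          = D (σ g) i k * D g k j := by
      intro g
      have e2 : ∀ a : Fin d, (Matrix.single i k (1 : ℂ) * D g) a j
          = if a = i then D g k j else 0 := by
        intro a
        rw [Matrix.mul_apply]
        simp only [Matrix.single, Matrix.of_apply, ite_and, boole_mul]
        rcases eq_or_ne a i with rfl | ha
        · simp
        · simp [ha]
          exact fun h' => absurd h'.symm ha
      rw [Matrix.mul_assoc, Matrix.mul_apply]
      calc ∑ a : Fin d, (D (σ g))ᵀ k a
            * (Matrix.single i k (1 : ℂ) * D g) a j
          = ∑ a : Fin d, if a = i then D (σ g) a k * D g k j else 0 := by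
            refine Finset.sum_congr rfl fun a _ => ?_
            rw [e2 a, Matrix.transpose_apply]
            split <;> simp
        _ = D (σ g) i k * D g k j := by
            rw [Finset.sum_ite_eq' Finset.univ i
              (fun a => D (σ g) a k * D g k j)]
            simp
    rw [Finset.sum_congr rfl fun g _ => hterm g] at h0
    simpa using h0
  -- the main sum vanishes
  have hX : ∑ g : G, ω (σ g) g • D (σ g * g) = 0 := by
    have hform : ∀ g : G, ω (σ g) g • D (σ g * g) = D (σ g) * D g :=
      fun g => (hmul _ _).symm
    rw [Finset.sum_congr rfl fun g _ => hform g]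
    ext i j
    rw [Matrix.sum_apply]
    simp only [Matrix.mul_apply, Matrix.zero_apply]
    rw [Finset.sum_comm]
    exact Finset.sum_eq_zero fun k _ => key2 i k j
  refine ⟨by rw [hX, smul_zero], ?_⟩
  have htr : ∑ g : G, ω (σ g) g * Matrix.trace (D (σ g * g))
      = Matrix.trace (∑ g : G, ω (σ g) g • D (σ g * g)) := by
    rw [Matrix.trace_sum]
    exact Finset.sum_congr rfl fun g _ => by rw [Matrix.trace_smul, smul_eq_mul]
  rw [htr, hX, Matrix.trace_zero, mul_zero]
end
end

section
/- Unitarity of the nonabelian Fourier matrix for projective irreps: let G be a finite group, ω a normalized unitary 2-cocycle on G, and (D^α)_{α ∈ A} a family of pairwise inequivalent irreducible unitary ω-projective representations of G with dimensions d_α satisfying ∑_{α ∈ A} d_α² = |G|. Let U be the matrix whose rows are indexed by triples θ = (α, i, j) with α ∈ A and i, j ∈ Fin d_α, whose columns are indexed by g ∈ G, and whose entries are U_{θ, g} = √(d_α/|G|) · (D^α g)_{i j}. Then U is unitary: U * Uᴴ = 1 and Uᴴ * U = 1. -/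
open Matrix Kronecker BigOperators

noncomputable section

section AuxLemmas

lemma zero_of_mulVecLin_ker_top {m n : ℕ} (T : Matrix (Fin m) (Fin n) ℂ)
    (h : LinearMap.ker T.mulVecLin = ⊤) : T = 0 := by
  ext i j
  have := LinearMap.ker_eq_top.mp h
  have h2 : T.mulVec (Pi.single j 1) = 0 := by
    have := congrFun (congrArg DFunLike.coe this) (Pi.single j 1)
    simpa [Matrix.mulVecLin] using this
  have := congrFun h2 i
  simpa [Matrix.mulVec_single] using this

lemma avg_intertwine {G : Type} [Group G] [Fintype G] (ω : G → G → ℂ) (hω : IsCocycle ω)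
    {d₁ d₂ : ℕ} {D₁ : G → Matrix (Fin d₁) (Fin d₁) ℂ} {D₂ : G → Matrix (Fin d₂) (Fin d₂) ℂ}
    (h₁ : IsUnitaryProjRep ω D₁) (h₂ : IsUnitaryProjRep ω D₂)
    (X : Matrix (Fin d₁) (Fin d₂) ℂ) (h : G) :
    D₁ h * (∑ g, D₁ g * X * (D₂ g)ᴴ) = (∑ g, D₁ g * X * (D₂ g)ᴴ) * D₂ h := by
  have homega : ∀ g k : G, ω g k * star (ω g k) = 1 := by
    intro g k
    have : ‖ω g k‖ = 1 := hω.1 g k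
    rw [Complex.star_def, Complex.mul_conj, ← Complex.sq_norm, this]
    norm_num
  have key : D₁ h * (∑ g, D₁ g * X * (D₂ g)ᴴ) * (D₂ h)ᴴ = ∑ g, D₁ g * X * (D₂ g)ᴴ := by
    rw [Matrix.mul_sum, Matrix.sum_mul]
    rw [← Equiv.sum_comp (Equiv.mulLeft h) (fun g => D₁ g * X * (D₂ g)ᴴ)]
    apply Finset.sum_congr rfl
    intro g _
    simp only [Equiv.coe_mulLeft]
    have e1 : D₁ h * (D₁ g * X * (D₂ g)ᴴ) * (D₂ h)ᴴ
        = (D₁ h * D₁ g) * X * ((D₂ h) * (D₂ g))ᴴ := by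
      rw [Matrix.conjTranspose_mul]; simp only [Matrix.mul_assoc]
    rw [e1, h₁.2 h g, h₂.2 h g, Matrix.conjTranspose_smul]
    rw [Matrix.smul_mul, Matrix.smul_mul, Matrix.mul_smul, smul_smul, homega, one_smul]
  have hu : (D₂ h)ᴴ * D₂ h = 1 := by
    have := (Matrix.mem_unitaryGroup_iff').mp (h₂.1 h)
    simpa [Matrix.star_eq_conjTranspose] using this
  calc D₁ h * (∑ g, D₁ g * X * (D₂ g)ᴴ)
      = D₁ h * (∑ g, D₁ g * X * (D₂ g)ᴴ) * ((D₂ h)ᴴ * D₂ h) := by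
        rw [hu, Matrix.mul_one]
    _ = (D₁ h * (∑ g, D₁ g * X * (D₂ g)ᴴ) * (D₂ h)ᴴ) * D₂ h := by
        rw [Matrix.mul_assoc (D₁ h * (∑ g, D₁ g * X * (D₂ g)ᴴ))]
    _ = (∑ g, D₁ g * X * (D₂ g)ᴴ) * D₂ h := by rw [key]

lemma schur_ne {G : Type} [Group G] {d₁ d₂ : ℕ}
    {D₁ : G → Matrix (Fin d₁) (Fin d₁) ℂ} {D₂ : G → Matrix (Fin d₂) (Fin d₂) ℂ}
    (h₁ : IsIrred D₁) (h₂ : IsIrred D₂) (hne : ¬ ProjEquiv D₁ D₂)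
    (T : Matrix (Fin d₁) (Fin d₂) ℂ) (hT : ∀ g, D₁ g * T = T * D₂ g) : T = 0 := by
  -- kernel is invariant under D₂
  have hker : LinearMap.ker T.mulVecLin = ⊥ ∨ LinearMap.ker T.mulVecLin = ⊤ := by
    apply h₂
    intro g v hv
    simp only [LinearMap.mem_ker, Matrix.mulVecLin_apply] at hv ⊢
    rw [Matrix.mulVec_mulVec, ← hT g, ← Matrix.mulVec_mulVec, hv, Matrix.mulVec_zero]
  rcases hker with hker | hker
  swap
  · exact zero_of_mulVecLin_ker_top T hker
  have hrange : LinearMap.range T.mulVecLin = ⊥ ∨ LinearMap.range T.mulVecLin = ⊤ := by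
    apply h₁
    rintro g v ⟨w, rfl⟩
    exact ⟨(D₂ g).mulVec w, by
      simp only [Matrix.mulVecLin_apply]
      rw [Matrix.mulVec_mulVec, ← hT g, ← Matrix.mulVec_mulVec]⟩
  rcases hrange with hrange | hrange
  · ext i j
    have : T.mulVec (Pi.single j 1) = 0 := by
      have : T.mulVecLin (Pi.single j 1) ∈ (⊥ : Submodule ℂ (Fin d₁ → ℂ)) := by
        rw [← hrange]; exact ⟨_, rfl⟩
      simpa [Matrix.mulVecLin] using this
    have := congrFun this i
    simpa [Matrix.mulVec_single] using this
  -- T is bijective: contradiction with inequivalence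
  exfalso; apply hne
  have hbij : Function.Bijective T.mulVecLin := by
    constructor
    · exact LinearMap.ker_eq_bot.mp hker
    · exact LinearMap.range_eq_top.mp hrange
  have hdim : d₁ = d₂ := by
    have := (LinearEquiv.ofBijective T.mulVecLin hbij).finrank_eq
    simpa [Module.finrank_fin_fun] using this.symm
  subst hdim
  have hcoe : ⇑(Matrix.toLinAlgEquiv' (R := ℂ) T) = ⇑T.mulVecLin := by
    funext v
    simp [Matrix.toLinAlgEquiv'_apply, Matrix.toLin'_apply, Matrix.mulVecLin_apply]
  have hunitEnd : IsUnit (Matrix.toLinAlgEquiv' (R := ℂ) T) := by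
    rw [Module.End.isUnit_iff, hcoe]
    exact hbij
  have hunitT : IsUnit T := by
    have := hunitEnd.map (Matrix.toLinAlgEquiv' (R := ℂ) (n := Fin d₁)).symm
    simpa using this
  refine ⟨rfl, T, (Matrix.isUnit_iff_isUnit_det T).mp hunitT, fun g => ?_⟩
  have hdet := (Matrix.isUnit_iff_isUnit_det T).mp hunitT
  have : T⁻¹ * (D₁ g * T) = T⁻¹ * (T * D₂ g) := by rw [hT g]
  rw [← mul_assoc, ← mul_assoc, Matrix.nonsing_inv_mul T hdet, one_mul] at this
  rw [← this]
  simp [Matrix.reindex, mul_assoc]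

lemma schur_self {G : Type} [Group G] {d : ℕ}
    {D : G → Matrix (Fin d) (Fin d) ℂ} (hirr : IsIrred D) (hd : 0 < d)
    (T : Matrix (Fin d) (Fin d) ℂ) (hT : ∀ g, D g * T = T * D g) :
    T = (T.trace / (d : ℂ)) • 1 := by
  haveI : Inhabited (Fin d) := ⟨⟨0, hd⟩⟩
  haveI : Nontrivial (Fin d → ℂ) := Pi.nontrivial
  obtain ⟨μ, hμ⟩ := Module.End.exists_eigenvalue (T.mulVecLin : Module.End ℂ (Fin d → ℂ))
  obtain ⟨v, hv⟩ := hμ.exists_hasEigenvector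
  have hT' : ∀ g, D g * (T - μ • 1) = (T - μ • 1) * D g := by
    intro g
    rw [Matrix.mul_sub, Matrix.sub_mul, hT g, Matrix.mul_smul, Matrix.smul_mul, mul_one, one_mul]
  have hker : LinearMap.ker (T - μ • 1).mulVecLin = ⊥ ∨
      LinearMap.ker (T - μ • 1).mulVecLin = ⊤ := by
    apply hirr
    intro g w hw
    simp only [LinearMap.mem_ker, Matrix.mulVecLin_apply] at hw ⊢
    rw [Matrix.mulVec_mulVec, ← hT' g, ← Matrix.mulVec_mulVec, hw, Matrix.mulVec_zero]
  have hvker : v ∈ LinearMap.ker (T - μ • 1).mulVecLin := by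
    simp only [LinearMap.mem_ker, Matrix.mulVecLin_apply]
    have : T.mulVec v = μ • v := by
      have := hv.1
      simpa [Matrix.mulVecLin] using this
    rw [Matrix.sub_mulVec, this, Matrix.smul_mulVec, Matrix.one_mulVec, sub_self]
  rcases hker with hker | hker
  · exact absurd (hker ▸ hvker) (by simpa using hv.2)
  have hT0 : T = μ • 1 := by
    have := zero_of_mulVecLin_ker_top _ hker
    exact sub_eq_zero.mp this
  have htr : T.trace = μ * d := by
    rw [hT0, Matrix.trace_smul, Matrix.trace_one]
    simp [smul_eq_mul]
  rw [htr, hT0]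
  have hdne : (d : ℂ) ≠ 0 := Nat.cast_ne_zero.mpr hd.ne'
  rw [mul_div_assoc, div_self hdne, mul_one]

lemma entry_formula {d₁ d₂ : ℕ} (M : Matrix (Fin d₁) (Fin d₁) ℂ)
    (N : Matrix (Fin d₂) (Fin d₂) ℂ) (i j : Fin d₁) (k l : Fin d₂) :
    (M * Matrix.single j l (1:ℂ) * Nᴴ) i k = M i j * star (N k l) := by
  simp [Matrix.mul_apply, Matrix.single, Matrix.conjTranspose_apply, ite_and,
    Finset.sum_ite_eq, Finset.mul_sum, mul_comm, mul_assoc]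

lemma orth_ne {G : Type} [Group G] [Fintype G] (ω : G → G → ℂ) (hω : IsCocycle ω)
    {d₁ d₂ : ℕ} {D₁ : G → Matrix (Fin d₁) (Fin d₁) ℂ} {D₂ : G → Matrix (Fin d₂) (Fin d₂) ℂ}
    (h₁ : IsUnitaryProjRep ω D₁) (h₂ : IsUnitaryProjRep ω D₂)
    (hi₁ : IsIrred D₁) (hi₂ : IsIrred D₂) (hne : ¬ ProjEquiv D₁ D₂)
    (i j : Fin d₁) (k l : Fin d₂) :
    ∑ g : G, D₁ g i j * star (D₂ g k l) = 0 := by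
  have hT := schur_ne hi₁ hi₂ hne (∑ g, D₁ g * Matrix.single j l (1:ℂ) * (D₂ g)ᴴ)
    (avg_intertwine ω hω h₁ h₂ _)
  have := congrFun (congrFun hT i) k
  rw [Matrix.sum_apply] at this
  simp only [entry_formula] at this
  simpa using this

lemma orth_self {G : Type} [Group G] [Fintype G] (ω : G → G → ℂ) (hω : IsCocycle ω)
    {d : ℕ} {D : G → Matrix (Fin d) (Fin d) ℂ}
    (h₁ : IsUnitaryProjRep ω D) (hi : IsIrred D)
    (i j k l : Fin d) :
    ∑ g : G, D g i j * star (D g k l)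
      = ((Fintype.card G : ℂ) / (d : ℂ)) * (if i = k then 1 else 0)
          * (if j = l then 1 else 0) := by
  have hd : 0 < d := j.pos
  set T := ∑ g, D g * Matrix.single j l (1:ℂ) * (D g)ᴴ with hTdef
  have hT := schur_self hi hd T (avg_intertwine ω hω h₁ h₁ _)
  have htr : T.trace = (Fintype.card G : ℂ) * (if j = l then 1 else 0) := by
    rw [hTdef, Matrix.trace_sum]
    have : ∀ g : G, (D g * Matrix.single j l (1:ℂ) * (D g)ᴴ).trace
        = (if j = l then (1:ℂ) else 0) := by
      intro g
      rw [Matrix.trace_mul_cycle]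
      have hu : (D g)ᴴ * D g = 1 := by
        have := (Matrix.mem_unitaryGroup_iff').mp (h₁.1 g)
        simpa [Matrix.star_eq_conjTranspose] using this
      rw [hu, Matrix.one_mul]
      by_cases hjl : j = l
      · simp [Matrix.trace, Matrix.single, Matrix.diag, hjl, eq_comm]
      · have : ∀ x : Fin d, ¬ (j = x ∧ l = x) := by
          rintro x ⟨rfl, rfl⟩; exact hjl rfl
        simp [Matrix.trace, Matrix.single, Matrix.diag, hjl, this]
    simp only [this]
    simp [Finset.sum_const, mul_comm]
  have hentry : T i k = ∑ g : G, D g i j * star (D g k l) := by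
    rw [hTdef, Matrix.sum_apply]
    simp only [entry_formula]
  have := congrFun (congrFun hT i) k
  rw [hentry] at this
  rw [this, htr]
  have hdne : (d : ℂ) ≠ 0 := Nat.cast_ne_zero.mpr hd.ne'
  by_cases hik : i = k <;> by_cases hjl : j = l <;>
    simp [hik, hjl, Matrix.one_apply, Matrix.smul_apply, div_mul_eq_mul_div, mul_comm,
      mul_div_assoc]

end AuxLemmas

/-- unitarity of the nonabelian Fourier matrix for projective irreps. -/
theorem fourier_matrix_unitary
    {G : Type} [Group G] [Fintype G] [DecidableEq G]
    (ω : G → G → ℂ) (hω : IsCocycle ω)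
    {A : Type} [Fintype A] [DecidableEq A]
    (dfam : A → ℕ)
    (Dfam : ∀ α : A, G → Matrix (Fin (dfam α)) (Fin (dfam α)) ℂ)
    (hrep : ∀ α, IsUnitaryProjRep ω (Dfam α))
    (hirr : ∀ α, IsIrred (Dfam α))
    (hinequiv : ∀ α β, α ≠ β → ¬ ProjEquiv (Dfam α) (Dfam β))
    (hdim : ∑ α : A, (dfam α) ^ 2 = Fintype.card G)
    (U : Matrix (Σ α : A, Fin (dfam α) × Fin (dfam α)) G ℂ)
    (hU : ∀ (α : A) (i j : Fin (dfam α)) (g : G),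
      U ⟨α, (i, j)⟩ g
        = (Real.sqrt ((dfam α : ℝ) / (Fintype.card G : ℝ)) : ℂ) * Dfam α g i j) :
    U * Uᴴ = 1 ∧ Uᴴ * U = 1 := by
  have hn : 0 < Fintype.card G := Fintype.card_pos
  have hnR : (0:ℝ) < (Fintype.card G : ℝ) := by exact_mod_cast hn
  have hUU : U * Uᴴ = 1 := by
    ext ⟨α, ⟨i, j⟩⟩ ⟨β, ⟨k, l⟩⟩
    rw [Matrix.mul_apply, Matrix.one_apply]
    have hsum : ∑ g, U ⟨α,(i,j)⟩ g * (Uᴴ g ⟨β,(k,l)⟩)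
        = ((Real.sqrt ((dfam α : ℝ) / (Fintype.card G : ℝ))) : ℂ)
            * ((Real.sqrt ((dfam β : ℝ) / (Fintype.card G : ℝ))) : ℂ)
            * ∑ g, Dfam α g i j * star (Dfam β g k l) := by
      rw [Finset.mul_sum]
      apply Finset.sum_congr rfl
      intro g _
      rw [Matrix.conjTranspose_apply, hU, hU, star_mul', Complex.star_def,
        Complex.conj_ofReal]
      ring
    rw [hsum]
    by_cases hab : α = β
    · subst hab
      rw [orth_self ω hω (hrep α) (hirr α)]
      have hda : 0 < dfam α := i.pos
      have hc : ((Real.sqrt ((dfam α : ℝ) / (Fintype.card G : ℝ))) : ℂ)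
          * ((Real.sqrt ((dfam α : ℝ) / (Fintype.card G : ℝ))) : ℂ)
          = (dfam α : ℂ) / (Fintype.card G : ℂ) := by
        rw [← Complex.ofReal_mul, Real.mul_self_sqrt (by positivity)]
        push_cast
        ring
      have hdaC : (dfam α : ℂ) ≠ 0 := Nat.cast_ne_zero.mpr hda.ne'
      have hnC : ((Fintype.card G : ℕ) : ℂ) ≠ 0 := Nat.cast_ne_zero.mpr hn.ne'
      rw [hc]
      by_cases hik : i = k <;> by_cases hjl : j = l <;>
        simp [hik, hjl, Prod.ext_iff] <;> field_simp
    · rw [orth_ne ω hω (hrep α) (hrep β) (hirr α) (hirr β) (hinequiv α β hab)]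
      have : (⟨α, (i,j)⟩ : (Σ α : A, Fin (dfam α) × Fin (dfam α))) ≠ ⟨β, (k,l)⟩ := by
        intro h
        exact hab (congrArg Sigma.fst h)
      simp [this]
  refine ⟨hUU, ?_⟩
  have hcards : Fintype.card (Σ α : A, Fin (dfam α) × Fin (dfam α)) = Fintype.card G := by
    rw [← hdim, Fintype.card_sigma]
    simp [sq]
  set e := Fintype.equivOfCardEq hcards with he
  have hM : (U.submatrix ⇑e.symm ⇑(Equiv.refl G)) * (Uᴴ.submatrix ⇑(Equiv.refl G) ⇑e.symm)
      = 1 := by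
    rw [Matrix.submatrix_mul_equiv, hUU, Matrix.submatrix_one_equiv]
  have hM2 : (Uᴴ.submatrix ⇑(Equiv.refl G) ⇑e.symm) * (U.submatrix ⇑e.symm ⇑(Equiv.refl G))
      = 1 := mul_eq_one_comm.mp hM
  have key := Matrix.submatrix_mul_equiv (Uᴴ.submatrix ⇑(Equiv.refl G) ⇑e.symm)
    (U.submatrix ⇑e.symm ⇑(Equiv.refl G)) id e id
  rw [hM2, Matrix.submatrix_id_id] at key
  rw [Matrix.submatrix_submatrix, Matrix.submatrix_submatrix] at key
  simpa using key
end
end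

section
/- Projective symmetry of the coefficient matrix: let G be a finite group, ω a normalized unitary 2-cocycle on G, and 𝒟 g the ω-projective regular representation matrices. For any c : G → ℂ, let W ∈ Matrix G G ℂ have entries W_{g_l, g_r} = (1/√|G|) · ω g_r (g_r⁻¹ * g_l) · c (g_r⁻¹ * g_l). Then (𝒟 g) * W * (𝒟 g)ᴴ = W for every g ∈ G; consequently the positive semidefinite matrix W * Wᴴ commutes with 𝒟 g for every g ∈ G. -/
open Matrix Kronecker BigOperators

noncomputable section

theorem projRegRep_conjTranspose_mul_self {G : Type} [Group G] [Fintype G] [DecidableEq G]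
    (ω : G → G → ℂ) (habs : ∀ g h, ‖ω g h‖ = 1) (g : G) :
    (projRegRep ω g)ᴴ * projRegRep ω g = 1 := by
  ext a b
  simp only [Matrix.mul_apply, conjTranspose_apply, projRegRep, apply_ite, star_zero,
    Matrix.one_apply]
  rw [Finset.sum_eq_single (g*a) (fun k _ hk => by split <;> simp [hk]) (by simp)]
  by_cases h : a = b
  · subst h
    simp [← Complex.normSq_eq_conj_mul_self, Complex.normSq_eq_norm_sq, habs]
  · have : ¬ (g*a = g*b) := by simpa using h
    simp [h, this]

theorem projRegRep_comm_W {G : Type} [Group G] [Fintype G] [DecidableEq G]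
    (ω : G → G → ℂ) (hω : IsCocycle ω)
    (c : G → ℂ) (W : Matrix G G ℂ)
    (hW : ∀ gl gr : G,
      W gl gr = ((Real.sqrt (Fintype.card G) : ℂ))⁻¹
        * ω gr (gr⁻¹ * gl) * c (gr⁻¹ * gl)) (g : G) :
    projRegRep ω g * W = W * projRegRep ω g := by
  ext a b
  simp only [Matrix.mul_apply, projRegRep, ite_mul, mul_ite, zero_mul, mul_zero]
  rw [Finset.sum_eq_single (g⁻¹*a) (fun k _ hk => by
        have : a ≠ g * k := fun h => hk (by rw [h]; group)
        simp [this])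
      (by simp),
    Finset.sum_eq_single (g*b) (fun k _ hk => by simp [hk]) (by simp)]
  rw [if_pos (by group), if_pos rfl, hW, hW]
  have hx : (g*b)⁻¹ * a = b⁻¹ * (g⁻¹ * a) := by group
  have hx2 : b * (b⁻¹ * (g⁻¹ * a)) = g⁻¹ * a := by group
  rw [hx]
  have hcoc := hω.2.2.2 g b (b⁻¹ * (g⁻¹ * a))
  rw [hx2] at hcoc
  linear_combination -((Real.sqrt (Fintype.card G) : ℂ))⁻¹ * c (b⁻¹ * (g⁻¹ * a)) * hcoc

/-- projective symmetry of the coefficient matrix. -/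
theorem coefficient_matrix_projective_symmetry
    {G : Type} [Group G] [Fintype G] [DecidableEq G]
    (ω : G → G → ℂ) (hω : IsCocycle ω)
    (c : G → ℂ)
    (W : Matrix G G ℂ)
    (hW : ∀ gl gr : G,
      W gl gr = ((Real.sqrt (Fintype.card G) : ℂ))⁻¹
        * ω gr (gr⁻¹ * gl) * c (gr⁻¹ * gl)) :
    (∀ g : G, projRegRep ω g * W * (projRegRep ω g)ᴴ = W) ∧
    (∀ g : G, W * Wᴴ * projRegRep ω g = projRegRep ω g * (W * Wᴴ)) := by

  have hU : ∀ g : G, (projRegRep ω g)ᴴ * projRegRep ω g = 1 :=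
    fun g => projRegRep_conjTranspose_mul_self ω hω.1 g
  have hU2 : ∀ g : G, projRegRep ω g * (projRegRep ω g)ᴴ = 1 :=
    fun g => mul_eq_one_comm.mpr (hU g)
  have hcomm : ∀ g : G, projRegRep ω g * W = W * projRegRep ω g :=
    fun g => projRegRep_comm_W ω hω c W hW g
  have hcommH : ∀ g : G, projRegRep ω g * Wᴴ = Wᴴ * projRegRep ω g := by
    intro g
    have h : Wᴴ * (projRegRep ω g)ᴴ = (projRegRep ω g)ᴴ * Wᴴ := by
      rw [← Matrix.conjTranspose_mul, ← Matrix.conjTranspose_mul, hcomm]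
    calc projRegRep ω g * Wᴴ
        = projRegRep ω g * Wᴴ * ((projRegRep ω g)ᴴ * projRegRep ω g) := by rw [hU, mul_one]
      _ = projRegRep ω g * (Wᴴ * (projRegRep ω g)ᴴ) * projRegRep ω g := by
          simp only [mul_assoc]
      _ = projRegRep ω g * ((projRegRep ω g)ᴴ * Wᴴ) * projRegRep ω g := by rw [h]
      _ = (projRegRep ω g * (projRegRep ω g)ᴴ) * Wᴴ * projRegRep ω g := by
          simp only [mul_assoc]
      _ = Wᴴ * projRegRep ω g := by rw [hU2, one_mul]
  constructor
  · intro g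
    rw [hcomm, mul_assoc, hU2, mul_one]
  · intro g
    calc W * Wᴴ * projRegRep ω g = W * (Wᴴ * projRegRep ω g) := by rw [mul_assoc]
      _ = W * (projRegRep ω g * Wᴴ) := by rw [hcommH]
      _ = (W * projRegRep ω g) * Wᴴ := by rw [mul_assoc]
      _ = (projRegRep ω g * W) * Wᴴ := by rw [hcomm]
      _ = projRegRep ω g * (W * Wᴴ) := by rw [mul_assoc]
end
end

section
/- Triviality of time-reversal-constrained coboundaries on exponent-3 abelian groups: let G be an abelian group in which every element g satisfies g³ = 1, let γ : G → ℂ with |γ(g)| = 1 for all g, and define ω(g,h) = γ(g*h) · γ(g)⁻¹ · γ(h)⁻¹. If ω(g,g) = 1 for all g ∈ G and ω(g,h)² = 1 for all g, h ∈ G, then ω(g,h) = 1 for all g, h ∈ G. -/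
open Matrix Kronecker BigOperators

noncomputable section

/-- triviality of time-reversal-constrained coboundaries on
exponent-3 abelian groups. -/
theorem exponent_three_coboundary_trivial
    {G : Type} [CommGroup G]
    (hexp : ∀ g : G, g ^ 3 = 1)
    (γ : G → ℂ) (hγ : ∀ g, ‖γ g‖ = 1)
    (ω : G → G → ℂ)
    (hωdef : ∀ g h, ω g h = γ (g * h) * (γ g)⁻¹ * (γ h)⁻¹)
    (hdiag : ∀ g, ω g g = 1)
    (hsq : ∀ g h, (ω g h) ^ 2 = 1) :
    ∀ g h, ω g h = 1 := by
  have hne : ∀ g : G, γ g ≠ 0 := by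
    intro g h
    have := hγ g
    rw [h] at this
    simp at this
  have hsq' : ∀ g : G, γ (g * g) = γ g * γ g := by
    intro g
    have h1 := hdiag g
    rw [hωdef] at h1
    field_simp [hne g] at h1
    exact h1.trans (sq _)
  have hcube : ∀ g : G, γ g ^ 3 = 1 := by
    intro g
    have h2 := hsq' (g * g)
    rw [hsq' g] at h2
    rw [show g * g * (g * g) = g ^ 3 * g by simp [pow_succ, pow_two, mul_assoc], hexp, one_mul] at h2
    have h3 : γ g * (γ g ^ 3 - 1) = 0 := by linear_combination -h2
    rcases mul_eq_zero.mp h3 with h | h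
    · exact absurd h (hne g)
    · linear_combination h
  intro g h
  have hω3 : ω g h ^ 3 = 1 := by
    simp [hωdef, mul_pow, inv_pow, hcube]
  linear_combination hω3 - ω g h * (hsq g h)
end
end
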